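/- arXiv:2105.04026 — 7 statements merged into one kernel-verified Lean document; each statement's English description precedes it below -/
import Mathlib

section
/- Let g : [0,1] → ℝ be the function g(x) = x − x², let I_n denote the piecewise linear interpolation of g at the 2^n + 1 equidistant points k·2^{-n}, k = 0, …, 2^n, and let h_k be the k-fold composition of the hat function h. Then for every n ≥ 1, I_n = Σ_{k=1}^n h_k / 2^{2k}, and consequently ‖g − I_n‖_{L^∞([0,1])} ≤ 2^{-2n-2}. -/
/-- The hat function on `[0,1]`. -/
noncomputable def hat (x : ℝ) : ℝ := if x ≤ 1/2 then 2 * x else 2 * (1 - x)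

lemma hat_left {x : ℝ} (h : x ≤ 1/2) : hat x = 2 * x := if_pos h

lemma hat_right {x : ℝ} (h : 1/2 ≤ x) : hat x = 2 - 2 * x := by
  unfold hat; split_ifs with h'
  · have : x = 1/2 := le_antisymm h' h
    rw [this]; norm_num
  · ring

lemma g_feq (y : ℝ) : y - y^2 = hat y / 4 + (hat y - (hat y)^2) / 4 := by
  unfold hat; split_ifs <;> ring

lemma g_sum (n : ℕ) (x : ℝ) :
    x - x^2 = (∑ j ∈ Finset.Icc 1 n, hat^[j] x / 2^(2*j))
      + (hat^[n] x - (hat^[n] x)^2) / 2^(2*n) := by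
  induction n with
  | zero => simp
  | succ n ih =>
    rw [Finset.sum_Icc_succ_top (by omega : 1 ≤ n + 1), ih,
      Function.iterate_succ_apply']
    have h := g_feq (hat^[n] x)
    have h2 : (2:ℝ)^(2*(n+1)) = 2^(2*n) * 4 := by ring
    rw [h2]
    set y := hat^[n] x
    have hp : (0:ℝ) < 2^(2*n) := by positivity
    linear_combination h / (2:ℝ)^(2*n)

lemma hatIter (n : ℕ) : ∀ k : ℕ, k < 2^n → ∀ x : ℝ,
    (k:ℝ)/2^n ≤ x → x ≤ ((k:ℝ)+1)/2^n →
    hat^[n] x = 2^n * x - k ∨ hat^[n] x = ((k:ℝ)+1) - 2^n * x := by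
  induction n with
  | zero =>
    intro k hk x h1 h2
    interval_cases k
    left; simp
  | succ n ih =>
    intro k hk x h1 h2
    have hpos : (0:ℝ) < 2^(n+1) := by positivity
    have hpn : (0:ℝ) < 2^n := by positivity
    have hps : (2:ℝ)^(n+1) = 2 * 2^n := by ring
    have H1 : (k:ℝ) ≤ 2^(n+1) * x := by rw [div_le_iff₀ hpos] at h1; linarith
    have H2 : 2^(n+1) * x ≤ (k:ℝ) + 1 := by rw [le_div_iff₀ hpos] at h2; linarith
    rw [Function.iterate_succ_apply]
    by_cases hks : k < 2^n
    · have hkr : (k:ℝ) + 1 ≤ 2^n := by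
        have : ((k+1 : ℕ):ℝ) ≤ ((2^n : ℕ):ℝ) := by exact_mod_cast Nat.succ_le_of_lt hks
        push_cast at this; linarith
      have hx2 : x ≤ 1/2 := by nlinarith
      rw [hat_left hx2]
      have b1 : (k:ℝ)/2^n ≤ 2*x := by rw [div_le_iff₀ hpn]; nlinarith
      have b2 : 2*x ≤ ((k:ℝ)+1)/2^n := by rw [le_div_iff₀ hpn]; nlinarith
      rcases ih k hks (2*x) b1 b2 with h | h
      · left; rw [h]; ring
      · right; rw [h]; ring
    · have hkr : (2^n : ℝ) ≤ k := by exact_mod_cast Nat.le_of_not_lt hks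
      have hx2 : 1/2 ≤ x := by nlinarith
      rw [hat_right hx2]
      set k' : ℕ := 2^(n+1) - 1 - k with hk'def
      have hk'lt : k' < 2^n := by
        have h2n : 2^(n+1) = 2 * 2^n := by ring
        omega
      have hcast : (k':ℝ) = 2^(n+1) - 1 - k := by
        have h0 : (k' + k + 1 : ℕ) = 2^(n+1) := by omega
        have := congrArg (Nat.cast : ℕ → ℝ) h0
        push_cast at this
        linarith
      have b1 : (k':ℝ)/2^n ≤ 2 - 2*x := by
        rw [div_le_iff₀ hpn, hcast]; nlinarith
      have b2 : 2 - 2*x ≤ ((k':ℝ)+1)/2^n := by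
        rw [le_div_iff₀ hpn, hcast]; nlinarith
      rcases ih k' hk'lt (2 - 2*x) b1 b2 with h | h
      · right; rw [h, hcast]; ring
      · left; rw [h, hcast]; ring

lemma affine_eq {a b A B p q : ℝ} (hpq : p ≠ q) (h1 : a*p+b = A*p+B)
    (h2 : a*q+b = A*q+B) (x : ℝ) : a*x+b = A*x+B := by
  have hA : a = A := by
    have h3 : (a - A)*(p - q) = 0 := by linear_combination h1 - h2
    rcases mul_eq_zero.mp h3 with h | h
    · linarith [sub_eq_zero.mp h]
    · exact absurd (sub_eq_zero.mp h) hpq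
  subst hA
  have hB : b = B := by linarith
  subst hB; rfl

/-- Let `g(x) = x − x²` and let `I` be the piecewise linear interpolation of `g`
at the `2^n + 1` equidistant points `k·2^{-n}` (i.e. `I` agrees with `g` at these
points and is affine on each subinterval). Then `I = Σ_{k=1}^n h_k / 2^{2k}`,
where `h_k` is the `k`-fold composition of the hat function, and consequently
`‖g − I‖_{L^∞([0,1])} ≤ 2^{-2n-2}`. -/
theorem interpolation_sum_of_sawtooths (n : ℕ) (hn : 1 ≤ n) (I : ℝ → ℝ)
    (hinterp : ∀ k : ℕ, k ≤ 2 ^ n →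
      I ((k : ℝ) / 2 ^ n) = (k : ℝ) / 2 ^ n - ((k : ℝ) / 2 ^ n) ^ 2)
    (haffine : ∀ k : ℕ, k < 2 ^ n → ∃ a b : ℝ,
      ∀ x ∈ Set.Icc ((k : ℝ) / 2 ^ n) (((k : ℝ) + 1) / 2 ^ n), I x = a * x + b) :
    (∀ x ∈ Set.Icc (0 : ℝ) 1, I x = ∑ k ∈ Finset.Icc 1 n, hat^[k] x / 2 ^ (2 * k)) ∧
    (∀ x ∈ Set.Icc (0 : ℝ) 1, |(x - x ^ 2) - I x| ≤ 1 / 2 ^ (2 * n + 2)) := by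
  have hpn : (0:ℝ) < 2^n := by positivity
  have hp2n : (0:ℝ) < 2^(2*n) := by positivity
  -- key: on each dyadic interval I agrees with explicit formula
  have key : ∀ k : ℕ, k < 2^n → ∀ x : ℝ, (k:ℝ)/2^n ≤ x → x ≤ ((k:ℝ)+1)/2^n →
      I x = (x - x^2) - ((2^n*x - k) - (2^n*x - k)^2)/2^(2*n) := by
    intro k hk x h1 h2
    obtain ⟨a, b, hab⟩ := haffine k hk
    set A : ℝ := 1 - (2*(k:ℝ)+1)/2^n with hAdef
    set B : ℝ := ((k:ℝ)^2+(k:ℝ))/2^(2*n) with hBdef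
    have hS : ∀ y : ℝ, (y - y^2) - ((2^n*y - k) - (2^n*y - k)^2)/2^(2*n) = A*y + B := by
      intro y
      rw [hAdef, hBdef]
      have h2n : (2:ℝ)^(2*n) = 2^n * 2^n := by rw [two_mul, pow_add]
      rw [h2n]
      field_simp
      ring
    have hple : (k:ℝ)/2^n ≤ ((k:ℝ)+1)/2^n := by
      gcongr
      linarith
    have hz1 : (2:ℝ)^n * ((k:ℝ)/2^n) - k = 0 := by field_simp; ring
    have hz2 : (2:ℝ)^n * (((k:ℝ)+1)/2^n) - k = 1 := by field_simp; ring
    have hq : I (((k:ℝ)+1)/2^n) = ((k:ℝ)+1)/2^n - (((k:ℝ)+1)/2^n)^2 := by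
      have := hinterp (k+1) (by omega)
      push_cast at this
      exact this
    have eqp : a*((k:ℝ)/2^n) + b = A*((k:ℝ)/2^n) + B := by
      rw [← hab _ ⟨le_refl _, hple⟩, hinterp k hk.le]
      have h := hS ((k:ℝ)/2^n)
      rw [hz1] at h
      simpa using h
    have eqq : a*(((k:ℝ)+1)/2^n) + b = A*(((k:ℝ)+1)/2^n) + B := by
      rw [← hab _ ⟨hple, le_refl _⟩, hq]
      have h := hS (((k:ℝ)+1)/2^n)
      rw [hz2] at h
      simpa using h
    have hpq : (k:ℝ)/2^n ≠ ((k:ℝ)+1)/2^n := by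
      intro h
      rw [div_eq_div_iff hpn.ne' hpn.ne'] at h
      nlinarith
    rw [hab x ⟨h1, h2⟩, affine_eq hpq eqp eqq x, hS x]
  -- cover: every x ∈ [0,1] is in some dyadic interval
  have cover : ∀ x ∈ Set.Icc (0:ℝ) 1, ∃ k : ℕ, k < 2^n ∧ (k:ℝ)/2^n ≤ x ∧ x ≤ ((k:ℝ)+1)/2^n := by
    intro x hx
    obtain ⟨hx0, hx1⟩ := hx
    refine ⟨min ⌊2^n * x⌋₊ (2^n - 1), ?_, ?_, ?_⟩
    · have : 1 ≤ 2^n := Nat.one_le_two_pow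
      omega
    · rw [div_le_iff₀ hpn]
      have h1 : (↑(min ⌊2^n * x⌋₊ (2^n - 1)) : ℝ) ≤ (⌊2^n * x⌋₊ : ℝ) := by
        exact_mod_cast Nat.min_le_left _ _
      have h2 : (⌊2^n * x⌋₊ : ℝ) ≤ 2^n * x := Nat.floor_le (by positivity)
      linarith
    · rw [le_div_iff₀ hpn]
      by_cases hf : ⌊2^n * x⌋₊ ≤ 2^n - 1
      · rw [min_eq_left hf]
        have := Nat.lt_floor_add_one (2^n * x)
        linarith
      · rw [min_eq_right (by omega)]
        have h1 : 1 ≤ 2^n := Nat.one_le_two_pow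
        have h2 : ((2^n - 1 : ℕ) : ℝ) + 1 = 2^n := by
          have : ((2^n - 1 : ℕ) : ℝ) = ((2^n : ℕ) : ℝ) - 1 := by
            have := congrArg (Nat.cast : ℕ → ℝ) (Nat.sub_add_cancel h1)
            push_cast at this ⊢
            linarith
          rw [this]; push_cast; ring
        rw [h2]
        nlinarith
  constructor
  · intro x hx
    obtain ⟨k, hk, h1, h2⟩ := cover x hx
    have hh : hat^[n] x - (hat^[n] x)^2 = (2^n*x - k) - (2^n*x - k)^2 := by
      rcases hatIter n k hk x h1 h2 with h | h <;> rw [h] <;> ring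
    rw [key k hk x h1 h2, g_sum n x, hh]
    ring
  · intro x hx
    obtain ⟨k, hk, h1, h2⟩ := cover x hx
    rw [key k hk x h1 h2]
    have ht0 : 0 ≤ 2^n*x - k := by rw [div_le_iff₀ hpn] at h1; linarith
    have ht1 : 2^n*x - k ≤ 1 := by rw [le_div_iff₀ hpn] at h2; linarith
    set t : ℝ := 2^n*x - k with htdef
    clear_value t
    have hT0 : 0 ≤ t - t^2 := by nlinarith
    have hT1 : t - t^2 ≤ 1/4 := by nlinarith [sq_nonneg (t - 1/2)]
    have hrw : (x - x^2) - ((x - x^2) - (t - t^2)/2^(2*n)) = (t - t^2)/2^(2*n) := by ring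
    rw [hrw, abs_of_nonneg (div_nonneg hT0 hp2n.le)]
    have h2n2 : (2:ℝ)^(2*n+2) = 2^(2*n) * 4 := by ring
    rw [h2n2, div_le_div_iff₀ hp2n (by positivity)]
    nlinarith [mul_le_mul_of_nonneg_right hT1 hp2n.le]
end

section
/- Let ρ : ℝ → ℝ be p-times differentiable at a point λ ∈ ℝ with ρ^{(p)}(λ) ≠ 0, and let K ⊂ ℝ be compact. Then the rescaled p-th order central difference quotients of ρ converge uniformly on K to the monomial x ↦ x^p: sup_{x ∈ K} | Σ_{i=0}^p ((−1)^i · binom(p,i) / (h^p · ρ^{(p)}(λ))) · ρ((p/2 − i)·h·x + λ) − x^p | → 0 as h → 0⁺. -/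
open Filter Asymptotics


lemma central_sum (p : ℕ) : ∀ k ≤ p, ∀ y : ℝ,
    ∑ i ∈ Finset.range (p + 1), (-1 : ℝ) ^ i * (p.choose i : ℝ) * (y - (i : ℝ)) ^ k
      = if k = p then (p.factorial : ℝ) else 0 := by
  induction p with
  | zero =>
    intro k hk y
    interval_cases k
    simp
  | succ p IH =>
    intro k hk y
    set F : ℕ → ℝ := fun i => (-1 : ℝ) ^ i * ((p + 1).choose i : ℝ) * (y - (i : ℝ)) ^ k with hF
    set G : ℕ → ℝ := fun i => (-1 : ℝ) ^ i * (p.choose i : ℝ) * (y - (i : ℝ)) ^ k with hG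
    set H : ℕ → ℝ := fun i => (-1 : ℝ) ^ i * (p.choose i : ℝ) * (y - 1 - (i : ℝ)) ^ k with hH
    have key1 : ∀ i : ℕ, F (i + 1) = -H i + G (i + 1) := by
      intro i
      simp only [hF, hG, hH]
      have e1 : ((p + 1).choose (i + 1) : ℝ) = (p.choose i : ℝ) + (p.choose (i + 1) : ℝ) := by
        exact_mod_cast congrArg (Nat.cast (R := ℝ)) (Nat.choose_succ_succ p i)
      rw [e1]
      push_cast
      ring
    have hFG0 : F 0 = G 0 := by simp [hF, hG]
    have hGtop : G (p + 1) = 0 := by simp [hG, Nat.choose_succ_self]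
    have hsplit : ∑ i ∈ Finset.range (p + 1 + 1), F i
        = ∑ i ∈ Finset.range (p + 1), (G i - H i) := by
      calc ∑ i ∈ Finset.range (p + 1 + 1), F i
          = ∑ i ∈ Finset.range (p + 1), F (i + 1) + F 0 := Finset.sum_range_succ' F (p + 1)
        _ = ∑ i ∈ Finset.range (p + 1), (-H i + G (i + 1)) + F 0 := by
            rw [Finset.sum_congr rfl fun i _ => key1 i]
        _ = -∑ i ∈ Finset.range (p + 1), H i
            + (∑ i ∈ Finset.range (p + 1), G (i + 1) + G 0) + (F 0 - G 0) := by
            rw [Finset.sum_add_distrib, Finset.sum_neg_distrib]; ring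
        _ = -∑ i ∈ Finset.range (p + 1), H i + ∑ i ∈ Finset.range (p + 1 + 1), G i := by
            rw [hFG0, ← Finset.sum_range_succ' G (p + 1)]; ring
        _ = -∑ i ∈ Finset.range (p + 1), H i + ∑ i ∈ Finset.range (p + 1), G i := by
            rw [Finset.sum_range_succ G (p + 1), hGtop, add_zero]
        _ = ∑ i ∈ Finset.range (p + 1), (G i - H i) := by
            rw [Finset.sum_sub_distrib]; ring
    have hbin : ∀ i ∈ Finset.range (p + 1),
        G i - H i = ∑ j ∈ Finset.range k, (k.choose j : ℝ) *
            ((-1 : ℝ) ^ i * (p.choose i : ℝ) * ((y - 1) - (i : ℝ)) ^ j) := by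
      intro i _
      have hb : (y - (i : ℝ)) ^ k
          = ∑ j ∈ Finset.range (k + 1), (y - 1 - (i : ℝ)) ^ j * (1 : ℝ) ^ (k - j) * (k.choose j : ℝ) := by
        have := add_pow (y - 1 - (i : ℝ)) 1 k
        rw [show (y - 1 - (i : ℝ)) + 1 = y - (i : ℝ) by ring] at this
        exact this
      have hdiff : (y - (i : ℝ)) ^ k - (y - 1 - (i : ℝ)) ^ k
          = ∑ j ∈ Finset.range k, (y - 1 - (i : ℝ)) ^ j * (k.choose j : ℝ) := by
        rw [hb, Finset.sum_range_succ]
        simp [Nat.choose_self, add_sub_cancel_right]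
      simp only [hG, hH]
      rw [show (-1:ℝ)^i * (p.choose i : ℝ) * (y - (i:ℝ))^k - (-1:ℝ)^i * (p.choose i : ℝ) * (y - 1 - (i:ℝ))^k
          = (-1:ℝ)^i * (p.choose i : ℝ) * ((y - (i:ℝ))^k - (y - 1 - (i:ℝ))^k) by ring, hdiff,
        Finset.mul_sum]
      exact Finset.sum_congr rfl fun j _ => by ring
    rw [hsplit, Finset.sum_congr rfl hbin, Finset.sum_comm]
    have hinner : ∀ j ∈ Finset.range k,
        ∑ i ∈ Finset.range (p + 1), (k.choose j : ℝ) *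
            ((-1 : ℝ) ^ i * (p.choose i : ℝ) * ((y - 1) - (i : ℝ)) ^ j)
        = (k.choose j : ℝ) * (if j = p then (p.factorial : ℝ) else 0) := by
      intro j hj
      rw [← Finset.mul_sum]
      have hjp : j ≤ p := by have := Finset.mem_range.1 hj; omega
      rw [IH j hjp (y - 1)]
    rw [Finset.sum_congr rfl hinner]
    by_cases hkp : k = p + 1
    · subst hkp
      rw [Finset.sum_eq_single p, if_pos rfl, if_pos rfl, Nat.choose_succ_self_right,
        Nat.factorial_succ]
      · push_cast; ring
      · intro b _ hb; simp [hb]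
      · intro h; exact absurd (Finset.self_mem_range_succ p) h
    · rw [if_neg hkp]
      apply Finset.sum_eq_zero
      intro j hj
      have : j ≠ p := by have h1 := Finset.mem_range.1 hj; omega
      simp [this]


lemma taylor_peano (p : ℕ) : ∀ (f : ℝ → ℝ) (a : ℝ), ContDiffAt ℝ p f a →
    (fun u : ℝ => f (a + u) - ∑ k ∈ Finset.range (p + 1),
        iteratedDeriv k f a / (k.factorial : ℝ) * u ^ k)
      =o[nhds 0] fun u => u ^ p := by
  induction p with
  | zero =>
    intro f a hf
    have h1 : Tendsto (fun u : ℝ => f (a + u)) (nhds 0) (nhds (f a)) := by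
      have h2 : Tendsto (fun u : ℝ => a + u) (nhds (0:ℝ)) (nhds a) := by
        simpa using (tendsto_const_nhds.add tendsto_id :
          Tendsto (fun u : ℝ => a + u) (nhds (0:ℝ)) (nhds (a + 0)))
      exact (hf.continuousAt.tendsto).comp h2
    have : Tendsto (fun u : ℝ => f (a + u) - f a) (nhds 0) (nhds 0) := by
      simpa using h1.sub_const (f a)
    have e1 : (fun u : ℝ => f (a + u) - ∑ k ∈ Finset.range (0 + 1),
        iteratedDeriv k f a / (k.factorial : ℝ) * u ^ k) = fun u : ℝ => f (a + u) - f a := by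
      funext u; simp
    have e2 : (fun u : ℝ => u ^ 0) = fun _ : ℝ => (1 : ℝ) := by funext u; simp
    rw [e1, e2]
    exact (isLittleO_one_iff ℝ).2 this
  | succ p IH =>
    intro f a hf
    obtain ⟨u, hu, hcd⟩ := hf.contDiffOn le_rfl (by simp)
    obtain ⟨v, hvu, hv, hav⟩ := mem_nhds_iff.1 hu
    have hcdv : ContDiffOn ℝ ((p : WithTop ℕ∞) + 1) f v := by
      have := hcd.mono hvu
      exact_mod_cast this
    have hsplit := (contDiffOn_succ_iff_deriv_of_isOpen hv).1 hcdv
    have hdiff : DifferentiableOn ℝ f v := hsplit.1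
    have hdcd : ContDiffAt ℝ p (deriv f) a :=
      hsplit.2.2.contDiffAt (hv.mem_nhds hav)
    have hIH := IH (deriv f) a hdcd
    rw [isLittleO_iff] at hIH ⊢
    intro c hc
    have hmem : ∀ᶠ t : ℝ in nhds 0, a + t ∈ v := by
      have h2 : Tendsto (fun t : ℝ => a + t) (nhds (0:ℝ)) (nhds a) := by
        simpa using (tendsto_const_nhds.add tendsto_id :
          Tendsto (fun t : ℝ => a + t) (nhds (0:ℝ)) (nhds (a + 0)))
      exact h2.eventually_mem (hv.mem_nhds hav)
    obtain ⟨δ, hδ, hball⟩ := Metric.eventually_nhds_iff.1 ((hIH hc).and hmem)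
    rw [Metric.eventually_nhds_iff]
    refine ⟨δ, hδ, fun w hw => ?_⟩
    rw [Real.dist_eq, sub_zero] at hw
    -- the error function and its derivative
    set g : ℝ → ℝ := fun t => f (a + t) - ∑ k ∈ Finset.range (p + 1 + 1),
        iteratedDeriv k f a / (k.factorial : ℝ) * t ^ k with hg
    set G : ℝ → ℝ := fun t => deriv f (a + t) - ∑ k ∈ Finset.range (p + 1),
        iteratedDeriv k (deriv f) a / (k.factorial : ℝ) * t ^ k with hG
    have hg0 : g 0 = 0 := by
      simp only [hg, add_zero]
      rw [Finset.sum_eq_single 0]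
      · simp
      · intro b _ hb
        rcases Nat.exists_eq_succ_of_ne_zero hb with ⟨m, rfl⟩
        simp [zero_pow]
      · intro h; simp at h
    have hgderiv : ∀ t : ℝ, a + t ∈ v → HasDerivAt g (G t) t := by
      intro t htv
      have h1 : HasDerivAt (fun s : ℝ => f (a + s)) (deriv f (a + t)) t := by
        have hft : HasDerivAt f (deriv f (a + t)) (a + t) :=
          (hdiff.differentiableAt (hv.mem_nhds htv)).hasDerivAt
        have haff : HasDerivAt (fun s : ℝ => a + s) 1 t := (hasDerivAt_id t).const_add a
        have := hft.comp t haff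
        rw [mul_one] at this
        exact this
      have h2 : HasDerivAt
          (fun s : ℝ => ∑ k ∈ Finset.range (p + 1 + 1),
            iteratedDeriv k f a / (k.factorial : ℝ) * s ^ k)
          (∑ k ∈ Finset.range (p + 1 + 1),
            iteratedDeriv k f a / (k.factorial : ℝ) * ((k : ℝ) * t ^ (k - 1))) t := by
        exact HasDerivAt.fun_sum fun k _ => (hasDerivAt_pow k t).const_mul _
      have h3 : ∑ k ∈ Finset.range (p + 1 + 1),
            iteratedDeriv k f a / (k.factorial : ℝ) * ((k : ℝ) * t ^ (k - 1))
          = ∑ k ∈ Finset.range (p + 1),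
            iteratedDeriv k (deriv f) a / (k.factorial : ℝ) * t ^ k := by
        rw [Finset.sum_range_succ' (fun k => iteratedDeriv k f a / (k.factorial : ℝ)
          * ((k : ℝ) * t ^ (k - 1))) (p + 1)]
        simp only [Nat.cast_zero, zero_mul, mul_zero, add_zero]
        refine Finset.sum_congr rfl fun j _ => ?_
        have hid : iteratedDeriv (j + 1) f a = iteratedDeriv j (deriv f) a := by
          rw [iteratedDeriv_succ']
        rw [hid, Nat.factorial_succ]
        have hfac : ((j.factorial : ℝ)) ≠ 0 := Nat.cast_ne_zero.2 j.factorial_ne_zero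
        have hj1 : ((j : ℝ) + 1) ≠ 0 := by positivity
        push_cast
        field_simp
      have hcomb := h1.sub h2
      rw [h3] at hcomb
      exact hcomb
    -- mean value argument on the closed ball of radius |w|
    have hsub : Metric.closedBall (0:ℝ) |w| ⊆ Metric.ball (0:ℝ) δ := by
      intro t ht
      rw [Metric.mem_closedBall, Real.dist_eq, sub_zero] at ht
      rw [Metric.mem_ball, Real.dist_eq, sub_zero]
      exact lt_of_le_of_lt ht hw
    have hbound : ∀ t ∈ Metric.closedBall (0:ℝ) |w|, ‖G t‖ ≤ c * |w| ^ p := by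
      intro t ht
      rw [Metric.mem_closedBall, Real.dist_eq, sub_zero] at ht
      have h4 := hball (y := t) (by rw [Real.dist_eq, sub_zero]; exact lt_of_le_of_lt ht hw)
      refine h4.1.trans ?_
      have : ‖t ^ p‖ ≤ |w| ^ p := by
        rw [norm_pow, Real.norm_eq_abs]
        exact pow_le_pow_left₀ (abs_nonneg t) ht p
      exact mul_le_mul_of_nonneg_left this hc.le
    have hderivs : ∀ t ∈ Metric.closedBall (0:ℝ) |w|,
        HasDerivWithinAt g (G t) (Metric.closedBall (0:ℝ) |w|) t := by
      intro t ht
      have h4 := hball (y := t) (by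
        rw [Metric.mem_closedBall, Real.dist_eq, sub_zero] at ht
        rw [Real.dist_eq, sub_zero]; exact lt_of_le_of_lt ht hw)
      exact (hgderiv t h4.2).hasDerivWithinAt
    have hmvt := (convex_closedBall (0:ℝ) |w|).norm_image_sub_le_of_norm_hasDerivWithin_le hderivs hbound (Metric.mem_closedBall_self (abs_nonneg w))
      (by rw [Metric.mem_closedBall, Real.dist_eq, sub_zero])
    rw [hg0, sub_zero, sub_zero] at hmvt
    calc ‖g w‖ ≤ c * |w| ^ p * ‖w‖ := hmvt
      _ = c * ‖w ^ (p + 1)‖ := by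
          rw [norm_pow, Real.norm_eq_abs, pow_succ]; ring

/-- If `ρ` is `p`-times differentiable at `λ` with `ρ^{(p)}(λ) ≠ 0` and `K ⊂ ℝ` is
compact, then the rescaled `p`-th order central difference quotients of `ρ` converge
uniformly on `K` to the monomial `x ↦ x^p` as `h → 0⁺`. -/
theorem difference_quotients_approximate_monomial
    (p : ℕ) (ρ : ℝ → ℝ) (lam : ℝ)
    (hρ : ContDiffAt ℝ p ρ lam)
    (hderiv : iteratedDeriv p ρ lam ≠ 0)
    (K : Set ℝ) (hK : IsCompact K) :
    ∀ ε > (0 : ℝ), ∃ δ > (0 : ℝ), ∀ h : ℝ, 0 < h → h < δ → ∀ x ∈ K,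
      |(∑ i ∈ Finset.range (p + 1),
          ((-1 : ℝ) ^ i * (p.choose i : ℝ)) / (h ^ p * iteratedDeriv p ρ lam) *
            ρ (((p : ℝ) / 2 - (i : ℝ)) * h * x + lam)) - x ^ p| ≤ ε := by
  intro ε hε
  set D : ℝ := iteratedDeriv p ρ lam with hD
  set r : ℝ → ℝ := fun u => ρ (lam + u) - ∑ k ∈ Finset.range (p + 1),
      iteratedDeriv k ρ lam / (k.factorial : ℝ) * u ^ k with hr
  have hro : r =o[nhds 0] fun u : ℝ => u ^ p := taylor_peano p ρ lam hρ
  obtain ⟨M₀, hM₀⟩ := hK.isBounded.subset_closedBall 0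
  set M : ℝ := max M₀ 0 with hM
  have hMnn : 0 ≤ M := le_max_right _ _
  have hMK : ∀ x ∈ K, |x| ≤ M := by
    intro x hx
    have := hM₀ hx
    rw [Metric.mem_closedBall, Real.dist_eq, sub_zero] at this
    exact this.trans (le_max_left _ _)
  set S : ℝ := ∑ i ∈ Finset.range (p + 1), (p.choose i : ℝ) with hS
  have hSnn : 0 ≤ S := Finset.sum_nonneg fun i _ => by positivity
  have hDpos : 0 < |D| := abs_pos.2 hderiv
  set C : ℝ := S * ((p : ℝ) * M + 1) ^ p / |D| + 1 with hC
  have hCge : 0 ≤ S * ((p : ℝ) * M + 1) ^ p / |D| := by positivity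
  have hC1 : (1 : ℝ) ≤ C := by rw [hC]; linarith
  have hCpos : 0 < C := lt_of_lt_of_le one_pos hC1
  set ε' : ℝ := ε / C with hε'
  have hε'pos : 0 < ε' := div_pos hε hCpos
  obtain ⟨δ₀, hδ₀, hsmall⟩ := Metric.eventually_nhds_iff.1 (hro.def hε'pos)
  have hpM : (0 : ℝ) < (p : ℝ) * M + 1 := by positivity
  set δ : ℝ := δ₀ / ((p : ℝ) * M + 1) with hδdef
  refine ⟨δ, div_pos hδ₀ hpM, fun h hh hhδ x hx => ?_⟩
  have hh0 : h ≠ 0 := ne_of_gt hh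
  have hhp : (0:ℝ) < h ^ p := pow_pos hh p
  -- bounds on the increments
  have htb : ∀ i ∈ Finset.range (p + 1),
      |((p : ℝ) / 2 - (i : ℝ)) * h * x| ≤ ((p : ℝ) * M + 1) * h := by
    intro i hi
    have hip : (i : ℝ) ≤ (p : ℝ) := by
      have := Finset.mem_range.1 hi; exact_mod_cast Nat.lt_succ_iff.1 this
    have hinn : (0 : ℝ) ≤ (i : ℝ) := Nat.cast_nonneg i
    have hpnn : (0 : ℝ) ≤ (p : ℝ) := Nat.cast_nonneg p
    have habs : |(p : ℝ) / 2 - (i : ℝ)| ≤ (p : ℝ) := by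
      rw [abs_le]; constructor <;> linarith
    have hxM := hMK x hx
    calc |((p : ℝ) / 2 - (i : ℝ)) * h * x|
        = |(p : ℝ) / 2 - (i : ℝ)| * |h| * |x| := by rw [abs_mul, abs_mul]
      _ ≤ (p : ℝ) * h * M := by
          rw [abs_of_pos hh]
          exact mul_le_mul (mul_le_mul_of_nonneg_right habs hh.le) hxM (abs_nonneg x)
            (by positivity)
      _ ≤ ((p : ℝ) * M + 1) * h := by nlinarith
  have htδ : ((p : ℝ) * M + 1) * h < δ₀ := by
    have := (mul_lt_mul_iff_right₀ hpM).2 hhδ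
    rwa [hδdef, mul_div_cancel₀ _ (ne_of_gt hpM)] at this
  -- key algebraic identity
  have key : (∑ i ∈ Finset.range (p + 1),
        ((-1 : ℝ) ^ i * (p.choose i : ℝ)) / (h ^ p * D) *
          ρ (((p : ℝ) / 2 - (i : ℝ)) * h * x + lam)) - x ^ p
      = (∑ i ∈ Finset.range (p + 1),
          (-1 : ℝ) ^ i * (p.choose i : ℝ) * r (((p : ℝ) / 2 - (i : ℝ)) * h * x)) / (h ^ p * D) := by
    have hρeq : ∀ i : ℕ, ρ (((p : ℝ) / 2 - (i : ℝ)) * h * x + lam)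
        = (∑ k ∈ Finset.range (p + 1), iteratedDeriv k ρ lam / (k.factorial : ℝ) *
            (((p : ℝ) / 2 - (i : ℝ)) * h * x) ^ k) + r (((p : ℝ) / 2 - (i : ℝ)) * h * x) := by
      intro i
      rw [hr]
      simp only
      rw [add_comm lam (((p : ℝ) / 2 - (i : ℝ)) * h * x)]
      ring
    have hT : ∑ i ∈ Finset.range (p + 1), (-1 : ℝ) ^ i * (p.choose i : ℝ) *
        (∑ k ∈ Finset.range (p + 1), iteratedDeriv k ρ lam / (k.factorial : ℝ) *
          (((p : ℝ) / 2 - (i : ℝ)) * h * x) ^ k)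
        = D * (h ^ p * x ^ p) := by
      have swap : ∑ i ∈ Finset.range (p + 1), (-1 : ℝ) ^ i * (p.choose i : ℝ) *
          (∑ k ∈ Finset.range (p + 1), iteratedDeriv k ρ lam / (k.factorial : ℝ) *
            (((p : ℝ) / 2 - (i : ℝ)) * h * x) ^ k)
          = ∑ k ∈ Finset.range (p + 1), iteratedDeriv k ρ lam / (k.factorial : ℝ) * (h * x) ^ k *
              ∑ i ∈ Finset.range (p + 1), (-1 : ℝ) ^ i * (p.choose i : ℝ) *
                ((p : ℝ) / 2 - (i : ℝ)) ^ k := by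
        simp_rw [Finset.mul_sum]
        rw [Finset.sum_comm]
        refine Finset.sum_congr rfl fun k _ => Finset.sum_congr rfl fun i _ => ?_
        rw [show ((p : ℝ) / 2 - (i : ℝ)) * h * x = ((p : ℝ) / 2 - (i : ℝ)) * (h * x) by ring,
          mul_pow]
        ring
      rw [swap]
      have hcs : ∀ k ∈ Finset.range (p + 1),
          iteratedDeriv k ρ lam / (k.factorial : ℝ) * (h * x) ^ k *
            ∑ i ∈ Finset.range (p + 1), (-1 : ℝ) ^ i * (p.choose i : ℝ) *
              ((p : ℝ) / 2 - (i : ℝ)) ^ k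
          = iteratedDeriv k ρ lam / (k.factorial : ℝ) * (h * x) ^ k *
              (if k = p then (p.factorial : ℝ) else 0) := by
        intro k hk
        rw [central_sum p k (Nat.lt_succ_iff.1 (Finset.mem_range.1 hk)) ((p : ℝ) / 2)]
      rw [Finset.sum_congr rfl hcs, Finset.sum_eq_single p]
      · rw [if_pos rfl]
        have hfac : ((p.factorial : ℝ)) ≠ 0 := Nat.cast_ne_zero.2 p.factorial_ne_zero
        rw [mul_pow]
        field_simp
        rw [hD]; ring
      · intro b _ hb; simp [hb]
      · intro hp; exact absurd (Finset.self_mem_range_succ p) hp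
    calc (∑ i ∈ Finset.range (p + 1),
          ((-1 : ℝ) ^ i * (p.choose i : ℝ)) / (h ^ p * D) *
            ρ (((p : ℝ) / 2 - (i : ℝ)) * h * x + lam)) - x ^ p
        = (∑ i ∈ Finset.range (p + 1),
            ((-1 : ℝ) ^ i * (p.choose i : ℝ) *
              ((∑ k ∈ Finset.range (p + 1), iteratedDeriv k ρ lam / (k.factorial : ℝ) *
                (((p : ℝ) / 2 - (i : ℝ)) * h * x) ^ k)
                + r (((p : ℝ) / 2 - (i : ℝ)) * h * x))) / (h ^ p * D)) - x ^ p := by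
          congr 1
          refine Finset.sum_congr rfl fun i _ => ?_
          rw [hρeq i, div_mul_eq_mul_div]
      _ = (D * (h ^ p * x ^ p) + ∑ i ∈ Finset.range (p + 1),
            (-1 : ℝ) ^ i * (p.choose i : ℝ) * r (((p : ℝ) / 2 - (i : ℝ)) * h * x))
            / (h ^ p * D) - x ^ p := by
          rw [← Finset.sum_div]
          congr 2
          rw [← hT, ← Finset.sum_add_distrib]
          exact Finset.sum_congr rfl fun i _ => by ring
      _ = (∑ i ∈ Finset.range (p + 1),
            (-1 : ℝ) ^ i * (p.choose i : ℝ) * r (((p : ℝ) / 2 - (i : ℝ)) * h * x)) / (h ^ p * D) := by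
          rw [add_div]
          have : D * (h ^ p * x ^ p) / (h ^ p * D) = x ^ p := by
            field_simp
          rw [this]
          ring
  rw [key]
  -- bound the remainder sum
  set R : ℝ := ∑ i ∈ Finset.range (p + 1),
      (-1 : ℝ) ^ i * (p.choose i : ℝ) * r (((p : ℝ) / 2 - (i : ℝ)) * h * x) with hR
  have hRb : |R| ≤ S * (ε' * (((p : ℝ) * M + 1) * h) ^ p) := by
    rw [hR]
    refine (Finset.abs_sum_le_sum_abs _ _).trans ?_
    rw [hS, Finset.sum_mul]
    refine Finset.sum_le_sum fun i hi => ?_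
    have h1 : |(-1 : ℝ) ^ i * (p.choose i : ℝ) * r (((p : ℝ) / 2 - (i : ℝ)) * h * x)|
        = (p.choose i : ℝ) * |r (((p : ℝ) / 2 - (i : ℝ)) * h * x)| := by
      rw [abs_mul, abs_mul, abs_pow, abs_neg, abs_one, one_pow, one_mul, Nat.abs_cast]
    rw [h1]
    refine mul_le_mul_of_nonneg_left ?_ (Nat.cast_nonneg _)
    have hlt : dist (((p : ℝ) / 2 - (i : ℝ)) * h * x) 0 < δ₀ := by
      rw [Real.dist_eq, sub_zero]
      exact lt_of_le_of_lt (htb i hi) htδ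
    have := hsmall hlt
    rw [Real.norm_eq_abs, Real.norm_eq_abs, abs_pow] at this
    refine this.trans ?_
    refine mul_le_mul_of_nonneg_left ?_ hε'pos.le
    exact pow_le_pow_left₀ (abs_nonneg _) (htb i hi) p
  have habsdiv : |R / (h ^ p * D)| = |R| / (h ^ p * |D|) := by
    rw [abs_div, abs_mul, abs_pow, abs_of_pos hh]
  rw [habsdiv]
  have hden : (0 : ℝ) < h ^ p * |D| := by positivity
  calc |R| / (h ^ p * |D|) ≤ S * (ε' * (((p : ℝ) * M + 1) * h) ^ p) / (h ^ p * |D|) :=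
        div_le_div_of_nonneg_right hRb hden.le
    _ = ε' * (S * ((p : ℝ) * M + 1) ^ p / |D|) := by
        rw [mul_pow]
        field_simp
    _ ≤ ε' * C := by
        refine mul_le_mul_of_nonneg_left ?_ hε'pos.le
        rw [hC]; linarith
    _ = ε := by rw [hε', div_mul_cancel₀ _ (ne_of_gt hCpos)]
end

section
/- Let d, m ∈ ℕ, let x⁽¹⁾, …, x⁽ᵐ⁾ ∈ ℝ^d be pairwise distinct points, let ρ ∈ C(ℝ) be an activation function that is not a polynomial. Then there exist first-layer parameters θ⁽¹⁾ = (W⁽¹⁾, b⁽¹⁾) ∈ ℝ^{m×d} × ℝ^m such that the m × m matrix A with entries A_{ij} = ρ(⟨W⁽¹⁾_i, x⁽ʲ⁾⟩ + b⁽¹⁾_i) is invertible; consequently, for every k ∈ ℕ and every choice of labels y⁽¹⁾, …, y⁽ᵐ⁾ ∈ ℝ^k, there is a matrix W⁽²⁾ ∈ ℝ^{k×m} such that the two-layer network x ↦ W⁽²⁾·ρ(W⁽¹⁾x + b⁽¹⁾) interpolates the data: it maps x⁽ⁱ⁾ to y⁽ⁱ⁾ for all i ∈ [m]. -/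
open Matrix MeasureTheory Convolution ContinuousLinearMap Polynomial Filter
open scoped ContDiff


lemma exists_antideriv {n : ℕ} {p : Polynomial ℝ} (hp : p.degree < n) :
    ∃ q : Polynomial ℝ, q.derivative = p ∧ q.degree < (n + 1 : ℕ) := by
  rcases eq_or_ne p 0 with rfl | hp0
  · refine ⟨0, by simp, ?_⟩
    rw [Polynomial.degree_zero]
    exact WithBot.bot_lt_coe _
  have hnd : p.natDegree < n := (Polynomial.natDegree_lt_iff_degree_lt hp0).mpr hp
  refine ⟨∑ i ∈ Finset.range n, C (p.coeff i / (i + 1)) * X ^ (i + 1), ?_, ?_⟩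
  · rw [derivative_sum]
    have h1 : ∀ i ∈ Finset.range n,
        derivative (C (p.coeff i / (i+1)) * X ^ (i+1)) = C (p.coeff i) * X ^ i := by
      intro i _
      rw [derivative_C_mul_X_pow, Nat.add_sub_cancel]
      congr 1
      rw [Nat.cast_add, Nat.cast_one]
      field_simp
    rw [Finset.sum_congr rfl h1]
    -- p = ∑ i in range n, C (coeff i) * X^i
    conv_rhs => rw [p.as_sum_range_C_mul_X_pow]
    symm
    apply Finset.sum_subset
    · exact Finset.range_subset_range.mpr hnd
    · intro i _ hi
      simp only [Finset.mem_range, not_lt] at hi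
      have hc : p.coeff i = 0 := p.coeff_eq_zero_of_natDegree_lt (Nat.lt_of_succ_le hi)
      simp [hc]
  · apply lt_of_le_of_lt (Polynomial.degree_sum_le _ _)
    rw [Finset.sup_lt_iff (by exact_mod_cast WithBot.bot_lt_coe _)]
    intro i hi
    apply lt_of_le_of_lt (Polynomial.degree_C_mul_X_pow_le _ _)
    exact_mod_cast Nat.succ_lt_succ (Finset.mem_range.mp hi)

lemma poly_of_iteratedDeriv_zero :
    ∀ (n : ℕ) (g : ℝ → ℝ), ContDiff ℝ ∞ g → (∀ t, iteratedDeriv n g t = 0) →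
      ∃ p : Polynomial ℝ, p.degree < (n : ℕ) ∧ ∀ t, g t = p.eval t := by
  intro n
  induction n with
  | zero =>
    intro g _ h0
    refine ⟨0, by simpa using WithBot.bot_lt_coe 0, fun t => by
      simpa [iteratedDeriv_zero] using h0 t⟩
  | succ n ih =>
    intro g hg h0
    have hg' : ContDiff ℝ ∞ (deriv g) := (contDiff_infty_iff_deriv.mp hg).2
    have hgd : Differentiable ℝ g := (contDiff_infty_iff_deriv.mp hg).1
    obtain ⟨p, hpdeg, hpeq⟩ := ih (deriv g) hg' (by
      intro t
      have := h0 t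
      rwa [iteratedDeriv_succ'] at this)
    obtain ⟨q, hqder, hqdeg⟩ := exists_antideriv hpdeg
    have hconst : ∀ t : ℝ, g t - q.eval t = g 0 - q.eval 0 := by
      intro t
      apply is_const_of_deriv_eq_zero (f := fun t => g t - q.eval t)
      · exact hgd.sub (Polynomial.differentiable q)
      · intro s
        rw [deriv_fun_sub (hgd s) (Polynomial.differentiableAt q)]
        rw [Polynomial.deriv, hqder, ← hpeq s, sub_self]
    refine ⟨q + C (g 0 - q.eval 0), ?_, ?_⟩
    · apply lt_of_le_of_lt (Polynomial.degree_add_le _ _)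
      apply max_lt hqdeg
      exact lt_of_le_of_lt Polynomial.degree_C_le (by exact_mod_cast Nat.succ_pos n)
    · intro t
      have := hconst t
      simp only [eval_add, eval_C]
      linarith

lemma deriv_relation {m : ℕ} (f : ℝ → ℝ) (hf : ContDiff ℝ ∞ f) (c s : Fin m → ℝ)
    (H : ∀ a b : ℝ, ∑ j, c j * f (a * s j + b) = 0) :
    ∀ (k : ℕ) (a b : ℝ), ∑ j, c j * (s j ^ k * iteratedDeriv k f (a * s j + b)) = 0 := by
  intro k
  induction k with
  | zero => intro a b; simpa [iteratedDeriv_zero] using H a b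
  | succ k ih =>
    intro a b
    -- F a = ∑ j, (c j * s j ^ k) * iteratedDeriv k f (a * s j + b) is identically 0
    have hD : ∀ u : ℝ, DifferentiableAt ℝ (iteratedDeriv k f) u := fun u =>
      (hf.differentiable_iteratedDeriv k (by exact_mod_cast lt_top_iff_ne_top.2 (by simp))) u
    have hterm : ∀ j : Fin m, HasDerivAt
        (fun a : ℝ => c j * (s j ^ k * iteratedDeriv k f (a * s j + b)))
        (c j * (s j ^ k * (iteratedDeriv (k+1) f (a * s j + b) * s j))) a := by
      intro j
      have hinner : HasDerivAt (fun a : ℝ => a * s j + b) (s j) a :=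
        by simpa using ((hasDerivAt_id a).mul_const (s j)).add_const b
      have houter : HasDerivAt (iteratedDeriv k f) (iteratedDeriv (k+1) f (a * s j + b))
          (a * s j + b) := by
        have := (hD (a * s j + b)).hasDerivAt
        rwa [← iteratedDeriv_succ] at this
      exact ((houter.comp a hinner).const_mul _).const_mul _
    have hsum : HasDerivAt (fun a : ℝ => ∑ j, c j * (s j ^ k * iteratedDeriv k f (a * s j + b)))
        (∑ j, c j * (s j ^ k * (iteratedDeriv (k+1) f (a * s j + b) * s j))) a :=
      HasDerivAt.fun_sum (fun j _ => hterm j)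
    have hzero : (fun a : ℝ => ∑ j, c j * (s j ^ k * iteratedDeriv k f (a * s j + b)))
        = fun _ => (0:ℝ) := funext (fun a => ih a b)
    have hzd : HasDerivAt (fun a : ℝ => ∑ j, c j * (s j ^ k * iteratedDeriv k f (a * s j + b)))
        0 a := by rw [hzero]; exact hasDerivAt_const a 0
    have heq := hsum.unique hzd
    calc ∑ j, c j * (s j ^ (k+1) * iteratedDeriv (k+1) f (a * s j + b))
        = ∑ j, c j * (s j ^ k * (iteratedDeriv (k+1) f (a * s j + b) * s j)) := by
          apply Finset.sum_congr rfl; intro j _; ring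
      _ = 0 := heq

lemma conv_relation {m : ℕ} (ρ : ℝ → ℝ) (hρ : Continuous ρ) (φ : ContDiffBump (0:ℝ))
    (c s : Fin m → ℝ) (H : ∀ a b : ℝ, ∑ j, c j * ρ (a * s j + b) = 0) (a b : ℝ) :
    ∑ j, c j * ((φ.normed volume ⋆[lsmul ℝ ℝ, volume] ρ) (a * s j + b)) = 0 := by
  have hce : ConvolutionExists (φ.normed volume) ρ (lsmul ℝ ℝ) volume :=
    HasCompactSupport.convolutionExists_left_of_continuous_right _ φ.hasCompactSupport_normed
      (φ.continuous_normed.locallyIntegrable) hρ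
  have hint : ∀ j : Fin m, Integrable
      (fun t => φ.normed volume t * ρ (a * s j + b - t)) volume := by
    intro j
    have := hce (a * s j + b)
    simpa [ConvolutionExistsAt, lsmul_apply, smul_eq_mul] using this
  calc ∑ j, c j * ((φ.normed volume ⋆[lsmul ℝ ℝ, volume] ρ) (a * s j + b))
      = ∑ j, ∫ t, c j * (φ.normed volume t * ρ (a * s j + b - t)) := by
        apply Finset.sum_congr rfl; intro j _
        rw [convolution_def]
        simp_rw [lsmul_apply, smul_eq_mul]
        rw [← MeasureTheory.integral_const_mul]
    _ = ∫ t, ∑ j, c j * (φ.normed volume t * ρ (a * s j + b - t)) := by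
        rw [integral_finset_sum]
        intro j _
        exact (hint j).const_mul _
    _ = ∫ t : ℝ, (0:ℝ) := by
        congr 1
        funext t
        have h2 : ∑ j, c j * (φ.normed volume t * ρ (a * s j + b - t))
            = φ.normed volume t * ∑ j, c j * ρ (a * s j + (b - t)) := by
          rw [Finset.mul_sum]
          apply Finset.sum_congr rfl; intro j _
          have he : a * s j + b - t = a * s j + (b - t) := by ring
          rw [he]; ring
        rw [h2, H a (b - t), mul_zero]
    _ = 0 := integral_zero _ _

lemma ridge_span_top {m : ℕ} (ρ : ℝ → ℝ) (hρcont : Continuous ρ)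
    (hρpoly : ¬ ∃ P : Polynomial ℝ, ∀ t : ℝ, ρ t = P.eval t)
    (s : Fin m → ℝ) (hs : Function.Injective s) :
    Submodule.span ℝ (Set.range (fun ab : ℝ × ℝ => fun j : Fin m => ρ (ab.1 * s j + ab.2))) = ⊤ := by
  by_contra hne
  obtain ⟨g, hg0, hker⟩ := Submodule.exists_le_ker_of_lt_top _ (lt_top_iff_ne_top.mpr hne)
  set c : Fin m → ℝ := fun j => g (fun i => if j = i then 1 else 0) with hc
  have hgv : ∀ v : Fin m → ℝ, g v = ∑ j, v j * c j := fun v => by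
    simpa [smul_eq_mul, hc] using LinearMap.pi_apply_eq_sum_univ g v
  have hc0 : c ≠ 0 := by
    intro h
    apply hg0
    apply LinearMap.ext
    intro v
    rw [hgv v, h]
    simp
  have H : ∀ a b : ℝ, ∑ j, c j * ρ (a * s j + b) = 0 := by
    intro a b
    have hmem : (fun j : Fin m => ρ (a * s j + b)) ∈
        Submodule.span ℝ (Set.range (fun ab : ℝ × ℝ => fun j : Fin m => ρ (ab.1 * s j + ab.2))) :=
      Submodule.subset_span ⟨(a, b), rfl⟩
    have := hker hmem
    rw [LinearMap.mem_ker, hgv] at this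
    rw [← this]
    apply Finset.sum_congr rfl
    intro j _
    ring
  -- Vandermonde: some power-moment of c is nonzero
  obtain ⟨k0, hk0⟩ : ∃ k0 : Fin m, ∑ j, c j * s j ^ (k0 : ℕ) ≠ 0 := by
    by_contra hall
    push_neg at hall
    have hU : IsUnit (Matrix.vandermonde s) :=
      (Matrix.isUnit_iff_isUnit_det _).mpr
        (isUnit_iff_ne_zero.mpr (Matrix.det_vandermonde_ne_zero_iff.mpr hs))
    have hinj := Matrix.vecMul_injective_iff_isUnit.mpr hU
    apply hc0
    apply hinj
    show Matrix.vecMul c _ = Matrix.vecMul 0 _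
    rw [Matrix.zero_vecMul]
    funext k
    rw [Matrix.vecMul, dotProduct]
    simpa [Matrix.vandermonde] using hall k
  -- bump sequence
  set φ : ℕ → ContDiffBump (0:ℝ) := fun n =>
    ⟨((n:ℝ)+1)⁻¹, 2*((n:ℝ)+1)⁻¹, by positivity, by
      have h1 : (0:ℝ) < ((n:ℝ)+1)⁻¹ := by positivity
      linarith⟩ with hφ
  have hφr : Tendsto (fun n => (φ n).rOut) atTop (nhds 0) := by
    have := tendsto_one_div_add_atTop_nhds_zero_nat.const_mul (2:ℝ)
    simp only [mul_zero] at this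
    convert this using 2 with n
    rw [hφ]
    simp [one_div]
  set f : ℕ → ℝ → ℝ := fun n => (φ n).normed volume ⋆[lsmul ℝ ℝ, volume] ρ with hf
  have hfs : ∀ n, ContDiff ℝ ∞ (f n) := fun n =>
    (φ n).hasCompactSupport_normed.contDiff_convolution_left _ (φ n).contDiff_normed
      hρcont.locallyIntegrable
  have hrel : ∀ n, ∀ a b : ℝ, ∑ j, c j * f n (a * s j + b) = 0 := fun n =>
    conv_relation ρ hρcont (φ n) c s H
  have hitd : ∀ n, ∀ b : ℝ, iteratedDeriv (k0 : ℕ) (f n) b = 0 := by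
    intro n b
    have h1 := deriv_relation (f n) (hfs n) c s (hrel n) (k0 : ℕ) 0 b
    have h2 : ∑ j, c j * (s j ^ (k0:ℕ) * iteratedDeriv (k0:ℕ) (f n) (0 * s j + b))
        = (∑ j, c j * s j ^ (k0:ℕ)) * iteratedDeriv (k0:ℕ) (f n) b := by
      rw [Finset.sum_mul]
      apply Finset.sum_congr rfl
      intro j _
      rw [zero_mul, zero_add]
      ring
    rw [h2] at h1
    exact (mul_eq_zero.mp h1).resolve_left hk0
  -- each f n is a polynomial of degree < m
  have hpoly : ∀ n, ∃ p : Polynomial ℝ, p.degree < (m : ℕ) ∧ ∀ t, f n t = p.eval t := by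
    intro n
    obtain ⟨p, hdeg, heq⟩ := poly_of_iteratedDeriv_zero (k0 : ℕ) (f n) (hfs n) (hitd n)
    exact ⟨p, lt_of_lt_of_le hdeg (by exact_mod_cast le_of_lt k0.2), heq⟩
  choose P hPdeg hPeq using hpoly
  -- Lagrange interpolation at nodes 0, 1, ..., m-1
  set v : ℕ → ℝ := fun i => (i : ℝ) with hv
  have hvinj : Set.InjOn v (Finset.range m) := fun i _ j _ h => Nat.cast_injective h
  have hcard : ((Finset.range m).card : WithBot ℕ) = (m : ℕ) := by simp
  have hLag : ∀ n t, f n t = ∑ i ∈ Finset.range m,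
      f n (v i) * (Lagrange.basis (Finset.range m) v i).eval t := by
    intro n t
    have h1 : P n = Lagrange.interpolate (Finset.range m) v (fun i => (P n).eval (v i)) :=
      Lagrange.eq_interpolate hvinj (by rw [Finset.card_range]; exact hPdeg n)
    calc f n t = (P n).eval t := hPeq n t
      _ = _ := by
        conv_lhs => rw [h1]
        rw [Lagrange.interpolate_apply, eval_finset_sum]
        apply Finset.sum_congr rfl
        intro i _
        rw [eval_mul, eval_C, ← hPeq n (v i)]
  -- pass to the limit
  apply hρpoly
  refine ⟨∑ i ∈ Finset.range m, C (ρ (v i)) * Lagrange.basis (Finset.range m) v i, fun t => ?_⟩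
  have hlim1 : Tendsto (fun n => f n t) atTop (nhds (ρ t)) :=
    ContDiffBump.convolution_tendsto_right_of_continuous hφr hρcont t
  have hlim2 : Tendsto (fun n => ∑ i ∈ Finset.range m,
      f n (v i) * (Lagrange.basis (Finset.range m) v i).eval t) atTop
      (nhds (∑ i ∈ Finset.range m, ρ (v i) * (Lagrange.basis (Finset.range m) v i).eval t)) := by
    apply tendsto_finset_sum
    intro i _
    exact (ContDiffBump.convolution_tendsto_right_of_continuous hφr hρcont (v i)).mul_const _
  have := tendsto_nhds_unique (hlim1.congr (fun n => hLag n t)) hlim2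
  rw [this, eval_finset_sum]
  apply Finset.sum_congr rfl
  intro i _
  rw [eval_mul, eval_C]

private noncomputable def dotLin {d : ℕ} (u : Fin d → ℝ) : (Fin d → ℝ) →ₗ[ℝ] ℝ where
  toFun w := w ⬝ᵥ u
  map_add' a b := add_dotProduct a b u
  map_smul' r a := by simp [smul_dotProduct, smul_eq_mul]

lemma exists_separating_direction {d m : ℕ} (x : Fin m → Fin d → ℝ)
    (hx : Function.Injective x) :
    ∃ w : Fin d → ℝ, Function.Injective (fun j => w ⬝ᵥ x j) := by
  by_contra h
  push_neg at h
  have hcover : ⋃ q : {q : Fin m × Fin m // q.1 ≠ q.2},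
      ((LinearMap.ker (dotLin (x q.1.1 - x q.1.2))) : Set (Fin d → ℝ)) = Set.univ := by
    apply Set.eq_univ_of_forall
    intro w
    obtain ⟨j, j', heq, hne⟩ := Function.not_injective_iff.mp (h w)
    refine Set.mem_iUnion.mpr ⟨⟨(j, j'), hne⟩, ?_⟩
    simp only [SetLike.mem_coe, LinearMap.mem_ker]
    show w ⬝ᵥ (x j - x j') = 0
    rw [dotProduct_sub, sub_eq_zero]
    exact heq
  obtain ⟨⟨⟨j, j'⟩, hne⟩, htop⟩ := Subspace.exists_eq_top_of_iUnion_eq_univ hcover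
  apply hne
  apply hx
  funext i
  have hzero : dotLin (x j - x j') = 0 := LinearMap.ker_eq_top.mp htop
  have h1 : (Pi.single i 1 : Fin d → ℝ) ⬝ᵥ (x j - x j') = 0 :=
    DFunLike.congr_fun hzero (Pi.single i 1)
  have hsingle : (Pi.single i 1 : Fin d → ℝ) ⬝ᵥ (x j - x j') = (x j - x j') i := by
    rw [single_dotProduct, one_mul]
  rw [hsingle] at h1
  exact sub_eq_zero.mp (by simpa using h1)


lemma second_layer {m : ℕ} (M : Matrix (Fin m) (Fin m) ℝ) (hU : IsUnit M)
    (k : ℕ) (y : Fin m → Fin k → ℝ) :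
    ∃ W2 : Matrix (Fin k) (Fin m) ℝ,
      ∀ i : Fin m, (fun j : Fin k => ∑ l : Fin m, W2 j l * M l i) = y i := by
  refine ⟨(Matrix.of fun j i => y i j) * M⁻¹, fun i => ?_⟩
  funext j
  have h1 : ∑ l : Fin m, ((Matrix.of fun j i => y i j) * M⁻¹) j l * M l i
      = (((Matrix.of fun j i => y i j) * M⁻¹) * M) j i := by
    rw [Matrix.mul_apply]
  rw [h1, Matrix.mul_assoc, Matrix.nonsing_inv_mul M ((Matrix.isUnit_iff_isUnit_det M).mp hU),
    Matrix.mul_one]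
  rfl

/-- Interpolation with two-layer networks: for pairwise distinct points
`x⁽¹⁾, …, x⁽ᵐ⁾ ∈ ℝ^d` and a continuous non-polynomial activation `ρ`, there exist
first-layer parameters `(W⁽¹⁾, b⁽¹⁾)` such that the matrix
`A_{ij} = ρ(⟨W⁽¹⁾_i, x⁽ʲ⁾⟩ + b⁽¹⁾_i)` is invertible; consequently, for every `k` and
every choice of labels `y⁽ⁱ⁾ ∈ ℝ^k` there is a second-layer matrix `W⁽²⁾` such that
the network `x ↦ W⁽²⁾·ρ(W⁽¹⁾x + b⁽¹⁾)` maps `x⁽ⁱ⁾` to `y⁽ⁱ⁾` for all `i`. -/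
theorem two_layer_interpolation
    (d m : ℕ) (x : Fin m → Fin d → ℝ) (hx : Function.Injective x)
    (ρ : ℝ → ℝ) (hρcont : Continuous ρ)
    (hρpoly : ¬ ∃ P : Polynomial ℝ, ∀ t : ℝ, ρ t = P.eval t) :
    ∃ (W1 : Fin m → Fin d → ℝ) (b1 : Fin m → ℝ),
      IsUnit (Matrix.of fun i j : Fin m => ρ (W1 i ⬝ᵥ x j + b1 i)) ∧
      ∀ (k : ℕ) (y : Fin m → Fin k → ℝ),
        ∃ W2 : Matrix (Fin k) (Fin m) ℝ,
          ∀ i : Fin m, (fun j : Fin k => ∑ l : Fin m, W2 j l * ρ (W1 l ⬝ᵥ x i + b1 l)) = y i := by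
  obtain ⟨w, hw⟩ := exists_separating_direction x hx
  set s : Fin m → ℝ := fun j => w ⬝ᵥ x j with hsdef
  have hspan := ridge_span_top ρ hρcont hρpoly s hw
  set F : ℝ × ℝ → (Fin m → ℝ) := fun ab => fun j : Fin m => ρ (ab.1 * s j + ab.2) with hF
  obtain ⟨bset, hsub, hspan2, hli⟩ := exists_linearIndependent ℝ (Set.range F)
  have hspantop : ⊤ ≤ Submodule.span ℝ (Set.range ((↑) : bset → (Fin m → ℝ))) := by
    rw [Subtype.range_coe_subtype, Set.setOf_mem_eq, hspan2, hspan]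
  let B : Module.Basis bset ℝ (Fin m → ℝ) := Module.Basis.mk hli hspantop
  have hfin : bset.Finite := hli.setFinite
  haveI : Fintype bset := hfin.fintype
  have hcardm : Fintype.card bset = m := by
    have h1 := Module.finrank_eq_card_basis B
    rw [Module.finrank_fin_fun] at h1
    exact h1.symm
  let e : Fin m ≃ bset := (Fintype.equivFinOfCardEq hcardm).symm
  set r : Fin m → (Fin m → ℝ) := fun i => ((e i : bset) : Fin m → ℝ) with hr
  have hrli : LinearIndependent ℝ r := hli.comp e e.injective
  have hmem : ∀ i, r i ∈ Set.range F := fun i => hsub (e i).2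
  choose ab hab using hmem
  refine ⟨fun i => (ab i).1 • w, fun i => (ab i).2, ?_⟩
  have hMeq : (Matrix.of fun i j : Fin m =>
      ρ ((((ab i).1 • w) : Fin d → ℝ) ⬝ᵥ x j + (ab i).2)) = Matrix.of fun i j => r i j := by
    funext i j
    simp only [Matrix.of_apply]
    rw [smul_dotProduct, smul_eq_mul, ← hab i]
  have hU : IsUnit (Matrix.of fun i j : Fin m =>
      ρ ((((ab i).1 • w) : Fin d → ℝ) ⬝ᵥ x j + (ab i).2)) := by
    rw [hMeq]
    exact (Matrix.linearIndependent_rows_iff_isUnit (A := Matrix.of fun i j => r i j)).mp hrli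
  refine ⟨hU, fun k y => ?_⟩
  obtain ⟨W2, hW2⟩ := second_layer _ hU k y
  exact ⟨W2, hW2⟩
end

section
/- (Carathéodory lemma in Hilbert space) Let H be a real Hilbert space, n ∈ ℕ, C > 0, and F ⊂ H with ‖f‖ ≤ C for all f ∈ F. If g lies in the convex hull of F, then there exist f₁, …, f_n ∈ F and coefficients c ∈ [0,1]^n with Σᵢ cᵢ = 1 such that ‖g − Σᵢ cᵢ fᵢ‖ ≤ C/√n. -/
open RealInnerProductSpace

lemma marg1 {ι : Type*} [Fintype ι] [DecidableEq ι] {n : ℕ} (w : ι → ℝ)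
    (hw : ∑ j, w j = 1) (i₀ : Fin n) (φ : ι → ℝ) :
    ∑ t : Fin n → ι, (∏ i, w (t i)) * φ (t i₀) = ∑ j, w j * φ j := by
  have h1 : ∀ t : Fin n → ι, (∏ i, w (t i)) * φ (t i₀)
      = ∏ i, (w (t i) * if i = i₀ then φ (t i) else 1) := by
    intro t
    rw [Finset.prod_mul_distrib]
    congr 1
    simp [Finset.prod_ite_eq']
  simp_rw [h1]
  rw [← Fintype.prod_sum fun i j => w j * if i = i₀ then φ j else 1]
  have h2 : ∀ i : Fin n, (∑ j, w j * if i = i₀ then φ j else 1)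
      = if i = i₀ then ∑ j, w j * φ j else 1 := by
    intro i; split <;> simp [hw]
  simp_rw [h2]
  simp [Finset.prod_ite_eq']

lemma margpair {ι : Type*} [Fintype ι] [DecidableEq ι] {n : ℕ} (w : ι → ℝ)
    (hw : ∑ j, w j = 1) {i₀ i₁ : Fin n} (hne : i₀ ≠ i₁) (φ ψ : ι → ℝ) :
    ∑ t : Fin n → ι, (∏ i, w (t i)) * (φ (t i₀) * ψ (t i₁))
      = (∑ j, w j * φ j) * (∑ j, w j * ψ j) := by
  have h1 : ∀ t : Fin n → ι, (∏ i, w (t i)) * (φ (t i₀) * ψ (t i₁))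
      = ∏ i, (w (t i) * ((if i = i₀ then φ (t i) else 1) * (if i = i₁ then ψ (t i) else 1))) := by
    intro t
    rw [Finset.prod_mul_distrib, Finset.prod_mul_distrib]
    congr 1
    congr 1 <;> simp [Finset.prod_ite_eq', hne, hne.symm]
  simp_rw [h1]
  rw [← Fintype.prod_sum fun i j => w j * ((if i = i₀ then φ j else 1) * (if i = i₁ then ψ j else 1))]
  have h2 : ∀ i : Fin n, (∑ j, w j * ((if i = i₀ then φ j else 1) * (if i = i₁ then ψ j else 1)))
      = (if i = i₀ then ∑ j, w j * φ j else 1) * (if i = i₁ then ∑ j, w j * ψ j else 1) := by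
    intro i
    rcases eq_or_ne i i₀ with rfl | h0 <;> rcases eq_or_ne i i₁ with rfl | h1
    · exact absurd rfl hne
    · simp [h1]
    · simp [h0]
    · simp [h0, h1, hw]
  simp_rw [h2]
  rw [Finset.prod_mul_distrib]
  simp [Finset.prod_ite_eq']

lemma marg2 {ι : Type*} [Fintype ι] [DecidableEq ι] {n : ℕ} (w : ι → ℝ)
    (hw : ∑ j, w j = 1) {i₀ i₁ : Fin n} (hne : i₀ ≠ i₁) (G : ι → ι → ℝ) :
    ∑ t : Fin n → ι, (∏ i, w (t i)) * G (t i₀) (t i₁)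
      = ∑ j, ∑ k, (w j * w k) * G j k := by
  have key : ∀ j k : ι, (∑ t : Fin n → ι, (∏ i, w (t i)) *
      ((if t i₀ = j then (1:ℝ) else 0) * (if t i₁ = k then (1:ℝ) else 0))) = w j * w k := by
    intro j k
    rw [margpair w hw hne (fun a => if a = j then (1:ℝ) else 0) (fun a => if a = k then (1:ℝ) else 0)]
    simp [mul_ite, Finset.sum_ite_eq']
  have expand : ∀ t : Fin n → ι, (∏ i, w (t i)) * G (t i₀) (t i₁)
      = ∑ j, ∑ k, ((∏ i, w (t i)) *
          ((if t i₀ = j then (1:ℝ) else 0) * (if t i₁ = k then (1:ℝ) else 0))) * G j k := by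
    intro t
    simp [ite_mul, mul_ite, Finset.sum_ite_eq]
  simp_rw [expand]
  rw [Finset.sum_comm]
  refine Finset.sum_congr rfl fun j _ => ?_
  rw [Finset.sum_comm]
  refine Finset.sum_congr rfl fun k _ => ?_
  rw [← Finset.sum_mul, key]


/-- Approximate Carathéodory lemma in Hilbert space: if `F` is a subset of a real
Hilbert space with `‖f‖ ≤ C` for all `f ∈ F`, and `g` lies in the convex hull of `F`,
then there are `f₁, …, f_n ∈ F` and convex coefficients `c` such that
`‖g − Σᵢ cᵢ fᵢ‖ ≤ C/√n`. -/
theorem approximate_caratheodory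
    {H : Type*} [NormedAddCommGroup H] [InnerProductSpace ℝ H] [CompleteSpace H]
    (n : ℕ) (hn : 0 < n) (C : ℝ) (hC : 0 < C)
    (F : Set H) (hF : ∀ f ∈ F, ‖f‖ ≤ C)
    (g : H) (hg : g ∈ convexHull ℝ F) :
    ∃ (f : Fin n → H) (c : Fin n → ℝ),
      (∀ i, f i ∈ F) ∧ (∀ i, c i ∈ Set.Icc (0 : ℝ) 1) ∧ (∑ i, c i = 1) ∧
      ‖g - ∑ i, c i • f i‖ ≤ C / Real.sqrt n := by
  classical
  obtain ⟨ι, hFt, w, z, hw0, hw1, hz, hx⟩ := mem_convexHull_iff_exists_fintype.1 hg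
  set W : (Fin n → ι) → ℝ := fun t => ∏ i, w (t i) with hWdef
  have hWnn : ∀ t, 0 ≤ W t := fun t => Finset.prod_nonneg fun i _ => hw0 _
  have hWsum : ∑ t : Fin n → ι, W t = 1 := by
    rw [← Fintype.sum_pow w n, hw1, one_pow]
  set φ : ι → ℝ := fun j => ⟪g, z j⟫ with hφdef
  set G : ι → ι → ℝ := fun j k => ⟪z j, z k⟫ with hGdef
  set M : ℝ := ∑ j, w j * ‖z j‖ ^ 2 with hMdef
  have hφsum : ∑ j, w j * φ j = ‖g‖ ^ 2 := by
    simp_rw [hφdef, ← real_inner_smul_right]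
    rw [← inner_sum, hx, real_inner_self_eq_norm_sq]
  have hGsum : ∑ j, ∑ k, (w j * w k) * G j k = ‖g‖ ^ 2 := by
    have h : ∀ j k, (w j * w k) * G j k = ⟪w j • z j, w k • z k⟫ := by
      intro j k
      rw [real_inner_smul_left, real_inner_smul_right, hGdef]
      ring
    simp_rw [h, ← inner_sum, ← sum_inner, hx, real_inner_self_eq_norm_sq]
  have hMle : M ≤ C ^ 2 := by
    rw [hMdef]
    calc ∑ j, w j * ‖z j‖ ^ 2 ≤ ∑ j, w j * C ^ 2 := by
          refine Finset.sum_le_sum fun j _ => ?_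
          exact mul_le_mul_of_nonneg_left
            (pow_le_pow_left₀ (norm_nonneg _) (hF _ (hz j)) 2) (hw0 j)
      _ = C ^ 2 := by rw [← Finset.sum_mul, hw1, one_mul]
  -- norm expansion
  have expand : ∀ t : Fin n → ι, ‖g - (n:ℝ)⁻¹ • ∑ i, z (t i)‖ ^ 2
      = ‖g‖ ^ 2 - 2 * (n:ℝ)⁻¹ * (∑ i, φ (t i)) + (n:ℝ)⁻¹ ^ 2 * ∑ i, ∑ i', G (t i) (t i') := by
    intro t
    rw [norm_sub_sq_real]
    congr 1
    · congr 1
      rw [real_inner_smul_right, inner_sum]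
      ring
    · rw [norm_smul, mul_pow]
      have h2 : ‖∑ i, z (t i)‖ ^ 2 = ∑ i, ∑ i', G (t i) (t i') := by
        rw [← real_inner_self_eq_norm_sq, sum_inner]
        exact Finset.sum_congr rfl fun i _ => by rw [inner_sum]
      rw [h2]
      norm_num
  have T2 : ∀ i : Fin n, ∑ t : Fin n → ι, W t * φ (t i) = ‖g‖ ^ 2 := fun i => by
    rw [hWdef, marg1 w hw1 i φ, hφsum]
  have T3 : ∀ i i' : Fin n, ∑ t : Fin n → ι, W t * G (t i) (t i')
      = if i = i' then M else ‖g‖ ^ 2 := by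
    intro i i'
    split
    · rename_i h; subst h
      rw [hWdef, marg1 w hw1 i (fun j => G j j)]
      simp [hGdef, real_inner_self_eq_norm_sq, hMdef]
    · rename_i h
      rw [hWdef, marg2 w hw1 h G, hGsum]
  have hdouble : ∑ i : Fin n, ∑ i' : Fin n, (if i = i' then M else ‖g‖ ^ 2)
      = n * M + ((n:ℝ) ^ 2 - n) * ‖g‖ ^ 2 := by
    have h1 : ∀ i : Fin n, ∑ i' : Fin n, (if i = i' then M else ‖g‖ ^ 2)
        = M + ((n:ℝ) - 1) * ‖g‖ ^ 2 := by
      intro i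
      have : ∀ i' : Fin n, (if i = i' then M else ‖g‖ ^ 2)
          = ‖g‖ ^ 2 + (if i = i' then M - ‖g‖ ^ 2 else 0) := by
        intro i'; split <;> ring
      simp_rw [this, Finset.sum_add_distrib, Finset.sum_const, Finset.sum_ite_eq]
      rw [if_pos (Finset.mem_univ i), Finset.card_univ, Fintype.card_fin, nsmul_eq_mul]
      ring
    simp_rw [h1, Finset.sum_const, Finset.card_univ, Fintype.card_fin, nsmul_eq_mul]
    ring
  have hnR : (0:ℝ) < n := by exact_mod_cast hn
  have hE : ∑ t : Fin n → ι, W t * ‖g - (n:ℝ)⁻¹ • ∑ i, z (t i)‖ ^ 2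
      = (M - ‖g‖ ^ 2) / n := by
    simp_rw [expand, mul_add, mul_sub]
    rw [Finset.sum_add_distrib, Finset.sum_sub_distrib]
    have p1 : ∑ t : Fin n → ι, W t * ‖g‖ ^ 2 = ‖g‖ ^ 2 := by
      rw [← Finset.sum_mul, hWsum, one_mul]
    have p2 : ∑ t : Fin n → ι, W t * (2 * (n:ℝ)⁻¹ * ∑ i, φ (t i))
        = 2 * (n:ℝ)⁻¹ * (n * ‖g‖ ^ 2) := by
      have e : ∀ t : Fin n → ι, W t * (2 * (n:ℝ)⁻¹ * ∑ i, φ (t i))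
          = 2 * (n:ℝ)⁻¹ * ∑ i, W t * φ (t i) := by
        intro t; rw [mul_left_comm, Finset.mul_sum]
      simp_rw [e]
      rw [← Finset.mul_sum, Finset.sum_comm]
      simp_rw [T2]
      rw [Finset.sum_const, Finset.card_univ, Fintype.card_fin, nsmul_eq_mul]
    have p3 : ∑ t : Fin n → ι, W t * ((n:ℝ)⁻¹ ^ 2 * ∑ i, ∑ i', G (t i) (t i'))
        = (n:ℝ)⁻¹ ^ 2 * ((n:ℝ) * M + ((n:ℝ) ^ 2 - n) * ‖g‖ ^ 2) := by
      have e : ∀ t : Fin n → ι, W t * ((n:ℝ)⁻¹ ^ 2 * ∑ i, ∑ i', G (t i) (t i'))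
          = (n:ℝ)⁻¹ ^ 2 * ∑ i, ∑ i', W t * G (t i) (t i') := by
        intro t
        rw [mul_left_comm]
        congr 1
        rw [Finset.mul_sum]
        exact Finset.sum_congr rfl fun i _ => Finset.mul_sum _ _ _
      simp_rw [e]
      rw [← Finset.mul_sum]
      congr 1
      calc ∑ t : Fin n → ι, ∑ i : Fin n, ∑ i' : Fin n, W t * G (t i) (t i')
          = ∑ i : Fin n, ∑ i' : Fin n, ∑ t : Fin n → ι, W t * G (t i) (t i') := by
            rw [Finset.sum_comm]
            exact Finset.sum_congr rfl fun i _ => Finset.sum_comm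
        _ = ∑ i : Fin n, ∑ i' : Fin n, (if i = i' then M else ‖g‖ ^ 2) := by
            exact Finset.sum_congr rfl fun i _ => Finset.sum_congr rfl fun i' _ => T3 i i'
        _ = (n:ℝ) * M + ((n:ℝ) ^ 2 - n) * ‖g‖ ^ 2 := hdouble
    rw [p1, p2, p3]
    field_simp
    ring
  have hex : ∃ t : Fin n → ι, ‖g - (n:ℝ)⁻¹ • ∑ i, z (t i)‖ ^ 2 ≤ C ^ 2 / n := by
    by_contra hcon
    push_neg at hcon
    have ht0 : ∃ t : Fin n → ι, 0 < W t := by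
      by_contra h; push_neg at h
      have h0 : ∑ t : Fin n → ι, W t = 0 :=
        Finset.sum_eq_zero fun t _ => le_antisymm (h t) (hWnn t)
      rw [hWsum] at h0; norm_num at h0
    obtain ⟨t₀, ht₀⟩ := ht0
    have hlt : ∑ t : Fin n → ι, W t * (C ^ 2 / n)
        < ∑ t : Fin n → ι, W t * ‖g - (n:ℝ)⁻¹ • ∑ i, z (t i)‖ ^ 2 :=
      Finset.sum_lt_sum (fun t _ => mul_le_mul_of_nonneg_left (hcon t).le (hWnn t))
        ⟨t₀, Finset.mem_univ _, mul_lt_mul_of_pos_left (hcon t₀) ht₀⟩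
    rw [← Finset.sum_mul, hWsum, one_mul, hE] at hlt
    have hle : (M - ‖g‖ ^ 2) / n ≤ C ^ 2 / n := by
      gcongr
      exact le_trans (sub_le_self _ (sq_nonneg _)) hMle
    exact absurd (lt_of_lt_of_le hlt hle) (lt_irrefl _)
  obtain ⟨t, ht⟩ := hex
  refine ⟨fun i => z (t i), fun _ => (n:ℝ)⁻¹, fun i => hz _, fun i => ⟨by positivity, ?_⟩, ?_, ?_⟩
  · have h1 : (1:ℝ) ≤ n := by exact_mod_cast hn
    exact inv_le_one_of_one_le₀ h1
  · rw [Finset.sum_const, Finset.card_univ, Fintype.card_fin, nsmul_eq_mul]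
    field_simp
  · rw [← Finset.smul_sum]
    have h1 : ‖g - (n:ℝ)⁻¹ • ∑ i, z (t i)‖ ≤ Real.sqrt (C ^ 2 / n) :=
      (Real.le_sqrt (norm_nonneg _) (by positivity)).2 ht
    rwa [Real.sqrt_div (sq_nonneg C), Real.sqrt_sq hC.le] at h1
end

section
/- Let d, n ∈ ℕ with n ≥ 100, let μ be a probability measure on the unit ball B₁(0) ⊂ ℝ^d, and let Φ(x) = Σ_{i=1}^n w⁽²⁾_i · ρ_R(⟨w⁽¹⁾_i, x⟩ + b⁽¹⁾_i) be a two-layer ReLU network with ‖w⁽¹⁾_i‖₂ ≤ 1/2 and |b⁽¹⁾_i| ≤ 1/2 for every i. Then there exists an index set I ⊂ [n] with |I| ≤ n/100 and coefficients w̃⁽²⁾ supported on I such that the pruned network Φ̃(x) = Σ_{i∈I} w̃⁽²⁾_i · ρ_R(⟨w⁽¹⁾_i, x⟩ + b⁽¹⁾_i) satisfies ‖Φ − Φ̃‖_{L²(μ)} ≤ 15·‖w⁽²⁾‖₁/√n. -/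
open MeasureTheory
open scoped RealInnerProductSpace

lemma exists_le_weighted_sum {n : ℕ} (a : Fin n → ℝ) (ha0 : ∀ i, 0 ≤ a i)
    (ha1 : ∑ i, a i = 1) (v : Fin n → ℝ) :
    ∃ i, v i ≤ ∑ j, a j * v j := by
  by_contra h
  push_neg at h
  obtain ⟨i0, hi0⟩ : ∃ i, 0 < a i := by
    by_contra h'
    push_neg at h'
    have : ∑ i, a i = 0 := Finset.sum_eq_zero fun i _ => le_antisymm (h' i) (ha0 i)
    rw [ha1] at this; norm_num at this
  have key : ∑ j, a j * (∑ l, a l * v l) < ∑ j, a j * v j :=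
    Finset.sum_lt_sum (fun j _ => mul_le_mul_of_nonneg_left (h j).le (ha0 j))
      ⟨i0, Finset.mem_univ i0, mul_lt_mul_of_pos_left (h i0) hi0⟩
  rw [← Finset.sum_mul, ha1, one_mul] at key
  exact lt_irrefl _ key

lemma maurey {E : Type*} [NormedAddCommGroup E] [InnerProductSpace ℝ E]
    {n : ℕ} (a : Fin n → ℝ) (ha0 : ∀ i, 0 ≤ a i) (ha1 : ∑ i, a i = 1)
    (g : Fin n → E) (R : ℝ) (hR0 : 0 ≤ R) (hR : ∀ i, ‖g i‖ ≤ R)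
    (k : ℕ) (hk : 1 ≤ k) :
    ∃ c : Fin n → ℕ, (∑ i, c i) = k ∧
      ‖(∑ i, a i • g i) - (k : ℝ)⁻¹ • ∑ i, (c i : ℝ) • g i‖ ^ 2 ≤ R ^ 2 / k := by
  set f : E := ∑ i, a i • g i with hf
  have hdev : ∑ i, a i • (f - g i) = 0 := by
    simp [Finset.smul_sum, smul_sub, Finset.sum_sub_distrib, ← Finset.sum_smul, ha1]
    exact sub_eq_zero.2 hf
  have hD : ∑ i, a i * ‖f - g i‖ ^ 2 ≤ R ^ 2 := by
    have expand : ∀ i, ‖f - g i‖ ^ 2 = ‖f‖ ^ 2 - 2 * ⟪f, g i⟫ + ‖g i‖ ^ 2 :=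
      fun i => norm_sub_sq_real f (g i)
    have hfg : ∑ i, a i * ⟪f, g i⟫ = ‖f‖ ^ 2 := by
      rw [← real_inner_self_eq_norm_sq, hf, inner_sum]
      exact Finset.sum_congr rfl fun i _ => by rw [real_inner_smul_right]
    calc ∑ i, a i * ‖f - g i‖ ^ 2
        = ∑ i, (a i * ‖f‖ ^ 2 - 2 * (a i * ⟪f, g i⟫) + a i * ‖g i‖ ^ 2) := by
          refine Finset.sum_congr rfl fun i _ => ?_
          rw [expand i]; ring
      _ = ‖f‖ ^ 2 - 2 * ‖f‖ ^ 2 + ∑ i, a i * ‖g i‖ ^ 2 := by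
          rw [Finset.sum_add_distrib, Finset.sum_sub_distrib, ← Finset.sum_mul, ha1,
            ← Finset.mul_sum, hfg]; ring
      _ ≤ ‖f‖ ^ 2 - 2 * ‖f‖ ^ 2 + ∑ i, a i * R ^ 2 := by
          gcongr with i
          · exact ha0 i
          · exact hR i
      _ = R ^ 2 - ‖f‖ ^ 2 := by rw [← Finset.sum_mul, ha1]; ring
      _ ≤ R ^ 2 := by nlinarith [sq_nonneg ‖f‖]
  have hexp : ∀ u : E, ∑ i, a i * ‖u + (f - g i)‖ ^ 2
      = ‖u‖ ^ 2 + ∑ i, a i * ‖f - g i‖ ^ 2 := by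
    intro u
    have hnorm : ∀ i, ‖u + (f - g i)‖ ^ 2 = ‖u‖ ^ 2 + 2 * ⟪u, f - g i⟫ + ‖f - g i‖ ^ 2 :=
      fun i => norm_add_sq_real u (f - g i)
    have hcross : ∑ i, a i * ⟪u, f - g i⟫ = 0 := by
      have : ∑ i, a i * ⟪u, f - g i⟫ = ⟪u, ∑ i, a i • (f - g i)⟫ := by
        rw [inner_sum]
        exact Finset.sum_congr rfl fun i _ => (real_inner_smul_right _ _ _).symm
      rw [this, hdev, inner_zero_right]
    calc ∑ i, a i * ‖u + (f - g i)‖ ^ 2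
        = ∑ i, (a i * ‖u‖ ^ 2 + 2 * (a i * ⟪u, f - g i⟫) + a i * ‖f - g i‖ ^ 2) := by
          refine Finset.sum_congr rfl fun i _ => ?_
          rw [hnorm i]; ring
      _ = ‖u‖ ^ 2 + ∑ i, a i * ‖f - g i‖ ^ 2 := by
          rw [Finset.sum_add_distrib, Finset.sum_add_distrib, ← Finset.sum_mul, ha1,
            ← Finset.mul_sum, hcross]; ring
  induction k with
  | zero => omega
  | succ k ih =>
    rcases Nat.eq_zero_or_pos k with hk0 | hk1
    · subst hk0
      obtain ⟨i, hi⟩ := exists_le_weighted_sum a ha0 ha1 (fun i => ‖f - g i‖ ^ 2)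
      refine ⟨fun j => if j = i then 1 else 0, by simp, ?_⟩
      have hS : ∑ j, ((if j = i then (1:ℕ) else 0 : ℕ) : ℝ) • g j = g i := by
        rw [Finset.sum_eq_single i] <;> simp +contextual
      rw [hS]
      simpa using hi.trans hD
    · obtain ⟨c, hcsum, hcbound⟩ := ih hk1
      set S : E := ∑ i, (c i : ℝ) • g i with hS
      set u : E := (k : ℝ) • f - S with hu
      have hknz : (k : ℝ) ≠ 0 := Nat.cast_ne_zero.2 (by omega)
      have hkpos : (0:ℝ) < k := by positivity
      have hknz1 : ((k : ℝ) + 1) ≠ 0 := by positivity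
      have hu_norm : ‖u‖ ^ 2 ≤ k * R ^ 2 := by
        have he : u = (k : ℝ) • (f - (k : ℝ)⁻¹ • S) := by
          rw [smul_sub, smul_smul, mul_inv_cancel₀ hknz, one_smul]
        rw [he, norm_smul, mul_pow, Real.norm_natCast]
        calc (k:ℝ)^2 * ‖f - (k : ℝ)⁻¹ • S‖ ^ 2 ≤ (k:ℝ)^2 * (R ^ 2 / k) := by gcongr
          _ = k * R ^ 2 := by field_simp
      have heq : ∀ i, f - ((k : ℝ) + 1)⁻¹ • (S + g i)
          = ((k : ℝ) + 1)⁻¹ • (u + (f - g i)) := by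
        intro i
        rw [hu]
        match_scalars <;> field_simp
      have hmean : ∑ i, a i * ‖f - ((k : ℝ) + 1)⁻¹ • (S + g i)‖ ^ 2
          ≤ R ^ 2 / ((k:ℝ) + 1) := by
        have h1 : ∀ i, ‖f - ((k:ℝ)+1)⁻¹ • (S + g i)‖ ^ 2
            = (((k:ℝ)+1)⁻¹) ^ 2 * ‖u + (f - g i)‖ ^ 2 := by
          intro i
          rw [heq i, norm_smul, mul_pow, Real.norm_eq_abs, abs_of_nonneg (by positivity)]
        calc ∑ i, a i * ‖f - ((k:ℝ)+1)⁻¹ • (S + g i)‖ ^ 2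
            = (((k:ℝ)+1)⁻¹) ^ 2 * ∑ i, a i * ‖u + (f - g i)‖ ^ 2 := by
              rw [Finset.mul_sum]
              exact Finset.sum_congr rfl fun i _ => by rw [h1 i]; ring
          _ = (((k:ℝ)+1)⁻¹) ^ 2 * (‖u‖ ^ 2 + ∑ i, a i * ‖f - g i‖ ^ 2) := by rw [hexp u]
          _ ≤ (((k:ℝ)+1)⁻¹) ^ 2 * ((k * R ^ 2) + R ^ 2) := by gcongr
          _ = R ^ 2 / ((k:ℝ) + 1) := by field_simp
      obtain ⟨i, hi⟩ := exists_le_weighted_sum a ha0 ha1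
        (fun i => ‖f - ((k : ℝ) + 1)⁻¹ • (S + g i)‖ ^ 2)
      refine ⟨fun j => c j + (if j = i then 1 else 0),
        by simp [Finset.sum_add_distrib, hcsum], ?_⟩
      have hS' : ∑ j, ((c j + if j = i then (1:ℕ) else 0 : ℕ) : ℝ) • g j = S + g i := by
        have hterm : ∀ j ∈ Finset.univ, ((c j + if j = i then (1:ℕ) else 0 : ℕ) : ℝ) • g j
            = (c j : ℝ) • g j + (if j = i then g j else 0) := by
          intro j _
          split_ifs with hji
          · push_cast; rw [add_smul, one_smul]
          · simp
        rw [Finset.sum_congr rfl hterm, Finset.sum_add_distrib,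
          Finset.sum_ite_eq' Finset.univ i]
        simp [hS]
      rw [hS']
      push_cast
      exact hi.trans hmean

lemma L2_norm_sq_eq {α : Type*} [MeasurableSpace α] (μ : Measure α) (h : Lp ℝ 2 μ) :
    ‖h‖ ^ 2 = ∫ x, (h x) ^ 2 ∂μ := by
  rw [← real_inner_self_eq_norm_sq, L2.inner_def]
  refine integral_congr_ae (Filter.Eventually.of_forall fun x => ?_)
  simp [RCLike.inner_apply, sq]

lemma Lp_coeFn_finsum {α ι : Type*} [MeasurableSpace α] {μ : Measure α}
    (s : Finset ι) (u : ι → Lp ℝ 2 μ) :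
    ⇑(∑ i ∈ s, u i) =ᵐ[μ] fun x => ∑ i ∈ s, u i x := by
  classical
  induction s using Finset.induction_on with
  | empty => simp only [Finset.sum_empty]; exact Lp.coeFn_zero ℝ 2 μ
  | insert _ _ hns ih =>
    rename_i b s
    rw [Finset.sum_insert hns]
    filter_upwards [Lp.coeFn_add (u b) (∑ i ∈ s, u i), ih] with x h1 h2
    simp only [h1, Pi.add_apply, h2, Finset.sum_insert hns]


/-- Carathéodory pruning of two-layer ReLU networks: for a probability measure `μ` on
the unit ball of `ℝ^d` and a two-layer ReLU network with `n ≥ 100` hidden neurons whose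
first-layer weights satisfy `‖w⁽¹⁾ᵢ‖ ≤ 1/2` and `|b⁽¹⁾ᵢ| ≤ 1/2`, there is a pruned
network supported on at most `n/100` neurons (keeping the first-layer parameters and
changing only the outer weights) within `L²(μ)`-distance `15·‖w⁽²⁾‖₁/√n`. -/
theorem caratheodory_pruning
    (d n : ℕ) (hn : 100 ≤ n)
    (μ : Measure (EuclideanSpace ℝ (Fin d))) [IsProbabilityMeasure μ]
    (hμ : μ (Metric.closedBall 0 1)ᶜ = 0)
    (w1 : Fin n → EuclideanSpace ℝ (Fin d)) (b1 : Fin n → ℝ) (w2 : Fin n → ℝ)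
    (hw1 : ∀ i, ‖w1 i‖ ≤ 1 / 2) (hb1 : ∀ i, |b1 i| ≤ 1 / 2) :
    ∃ (I : Finset (Fin n)) (w2' : Fin n → ℝ),
      (I.card : ℝ) ≤ (n : ℝ) / 100 ∧ (∀ i ∉ I, w2' i = 0) ∧
      Real.sqrt (∫ x, ((∑ i, w2 i * max 0 (⟪w1 i, x⟫ + b1 i))
          - ∑ i, w2' i * max 0 (⟪w1 i, x⟫ + b1 i)) ^ 2 ∂μ)
        ≤ 15 * (∑ i, |w2 i|) / Real.sqrt n := by
  classical
  set fe : Fin n → EuclideanSpace ℝ (Fin d) → ℝ :=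
    fun i x => max 0 (⟪w1 i, x⟫ + b1 i) with hfe
  have hcont : ∀ i, Continuous (fe i) := by
    intro i
    exact continuous_const.max ((continuous_const.inner continuous_id).add continuous_const)
  have hae : ∀ᵐ x ∂μ, x ∈ Metric.closedBall (0 : EuclideanSpace ℝ (Fin d)) 1 :=
    mem_ae_iff.2 hμ
  have hbd : ∀ i, ∀ᵐ x ∂μ, ‖fe i x‖ ≤ 1 := by
    intro i
    filter_upwards [hae] with x hx
    have hx1 : ‖x‖ ≤ 1 := by simpa [mem_closedBall_zero_iff] using hx
    have h1 : |⟪w1 i, x⟫ + b1 i| ≤ 1 := by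
      have h2 : |⟪w1 i, x⟫| ≤ 1 / 2 := by
        calc |⟪w1 i, x⟫| ≤ ‖w1 i‖ * ‖x‖ := abs_real_inner_le_norm _ _
          _ ≤ (1 / 2) * 1 := mul_le_mul (hw1 i) hx1 (norm_nonneg _) (by norm_num)
          _ = 1 / 2 := by norm_num
      calc |⟪w1 i, x⟫ + b1 i| ≤ |⟪w1 i, x⟫| + |b1 i| := abs_add_le _ _
        _ ≤ 1 / 2 + 1 / 2 := add_le_add h2 (hb1 i)
        _ = 1 := by norm_num
    rw [Real.norm_eq_abs, abs_of_nonneg (le_max_left _ _)]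
    exact max_le (by norm_num) ((le_abs_self _).trans h1)
  have hmem : ∀ i, MemLp (fe i) 2 μ := fun i =>
    MemLp.of_bound (hcont i).aestronglyMeasurable 1 (hbd i)
  set e : Fin n → Lp ℝ 2 μ := fun i => (hmem i).toLp (fe i) with he
  have he_norm : ∀ i, ‖e i‖ ≤ 1 := by
    intro i
    have h2 : ‖e i‖ ^ 2 ≤ 1 := by
      rw [L2_norm_sq_eq]
      have hcg : ∫ x, (e i x) ^ 2 ∂μ = ∫ x, (fe i x) ^ 2 ∂μ :=
        integral_congr_ae ((hmem i).coeFn_toLp.mono fun x hx => congrArg (· ^ 2) hx)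
      rw [hcg]
      calc ∫ x, (fe i x) ^ 2 ∂μ ≤ ∫ _x, (1:ℝ) ∂μ := by
            refine integral_mono_ae (hmem i).integrable_sq (integrable_const 1) ?_
            filter_upwards [hbd i] with x hx
            rw [← sq_abs]
            exact pow_le_one₀ (abs_nonneg _) (by simpa [Real.norm_eq_abs] using hx)
        _ = 1 := by simp
    nlinarith [norm_nonneg (e i)]
  set A : ℝ := ∑ i, |w2 i| with hA
  have hA0 : 0 ≤ A := Finset.sum_nonneg fun i _ => abs_nonneg _
  by_cases hAz : A = 0
  · have hz : ∀ i, w2 i = 0 := by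
      intro i
      exact abs_eq_zero.1 ((Finset.sum_eq_zero_iff_of_nonneg
        fun j _ => abs_nonneg (w2 j)).1 hAz i (Finset.mem_univ i))
    refine ⟨∅, fun _ => 0, by simp; positivity, by simp, ?_⟩
    simp [hz, hAz]
  · have hApos : 0 < A := lt_of_le_of_ne hA0 (Ne.symm hAz)
    set sgn : Fin n → ℝ := fun i => if 0 ≤ w2 i then 1 else -1 with hsgn
    have hsgn_mul : ∀ i, |w2 i| * sgn i = w2 i := by
      intro i
      by_cases h : 0 ≤ w2 i
      · simp [hsgn, h, abs_of_nonneg h]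
      · push_neg at h
        simp [hsgn, not_le.2 h, abs_of_neg h]
    have hsgn_abs : ∀ i, |sgn i| = 1 := by
      intro i; by_cases h : 0 ≤ w2 i <;> simp [hsgn, h]
    set a : Fin n → ℝ := fun i => |w2 i| / A with ha
    have ha0 : ∀ i, 0 ≤ a i := fun i => by positivity
    have ha1 : ∑ i, a i = 1 := by
      rw [ha, ← Finset.sum_div, ← hA]
      exact div_self hAz
    set g : Fin n → Lp ℝ 2 μ := fun i => (A * sgn i) • e i with hg
    have hg_norm : ∀ i, ‖g i‖ ≤ A := by
      intro i
      rw [hg, norm_smul]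
      calc ‖A * sgn i‖ * ‖e i‖ ≤ ‖A * sgn i‖ * 1 :=
            mul_le_mul_of_nonneg_left (he_norm i) (norm_nonneg _)
        _ = A := by
            rw [mul_one, Real.norm_eq_abs, abs_mul, hsgn_abs, mul_one, abs_of_nonneg hA0]
    set k : ℕ := n / 100 with hk
    have hk1 : 1 ≤ k := by omega
    have hkR : (0:ℝ) < k := by exact_mod_cast hk1
    obtain ⟨c, hcsum, hcb⟩ := maurey a ha0 ha1 g A hA0 hg_norm k hk1
    have hfa : ∑ i, a i • g i = ∑ i, w2 i • e i := by
      refine Finset.sum_congr rfl fun i _ => ?_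
      rw [hg, smul_smul]
      congr 1
      rw [ha]
      calc |w2 i| / A * (A * sgn i) = |w2 i| * sgn i * (A / A) := by ring
        _ = w2 i := by rw [div_self hAz, mul_one, hsgn_mul]
    set I : Finset (Fin n) := Finset.univ.filter (fun i => c i ≠ 0) with hI
    set w2' : Fin n → ℝ := fun i => A * sgn i * (c i : ℝ) / k with hw2'
    have hcard : I.card ≤ k := by
      calc I.card = ∑ _i ∈ I, 1 := Finset.card_eq_sum_ones I
        _ ≤ ∑ i ∈ I, c i := Finset.sum_le_sum fun i hi => by
            simp [hI] at hi; omega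
        _ ≤ ∑ i, c i := Finset.sum_le_sum_of_subset (Finset.subset_univ I)
        _ = k := hcsum
    have hcardR : (I.card : ℝ) ≤ (n:ℝ) / 100 := by
      refine le_trans (by exact_mod_cast hcard : (I.card:ℝ) ≤ (k:ℝ)) ?_
      have : ((n / 100 : ℕ) : ℝ) ≤ (n:ℝ) / 100 := Nat.cast_div_le
      simpa [hk] using this
    have hsupp : ∀ i ∉ I, w2' i = 0 := by
      intro i hi
      simp [hI] at hi
      simp [hw2', hi]
    have hG : (k : ℝ)⁻¹ • ∑ i, (c i : ℝ) • g i = ∑ i, w2' i • e i := by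
      rw [Finset.smul_sum]
      refine Finset.sum_congr rfl fun i _ => ?_
      rw [hg, smul_smul, smul_smul, hw2']
      congr 1
      ring
    set F := ∑ i, w2 i • e i with hF
    set G := ∑ i, w2' i • e i with hGdef
    have hnormFG : ‖F - G‖ ^ 2 ≤ A ^ 2 / k := by
      rw [hfa, hG] at hcb
      exact hcb
    have hcoe : ∀ (v : Fin n → ℝ), ⇑(∑ i, v i • e i) =ᵐ[μ] fun x => ∑ i, v i * fe i x := by
      intro v
      have h1 := Lp_coeFn_finsum Finset.univ (fun i => v i • e i)
      have h2 : ∀ᵐ x ∂μ, ∀ i, (v i • e i : Lp ℝ 2 μ) x = v i * fe i x := by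
        rw [MeasureTheory.ae_all_iff]
        intro i
        filter_upwards [Lp.coeFn_smul (v i) (e i), (hmem i).coeFn_toLp] with x hxa hxb
        rw [hxa]
        simp [hxb]
        left; exact hxb
      filter_upwards [h1, h2] with x h1x h2x
      rw [h1x]
      exact Finset.sum_congr rfl fun i _ => h2x i
    have hFG : (fun x => (∑ i, w2 i * fe i x) - ∑ i, w2' i * fe i x) =ᵐ[μ] ⇑(F - G) := by
      filter_upwards [Lp.coeFn_sub F G, hcoe w2, hcoe w2'] with x h1 h2 h3
      rw [h1]
      simp [h2, h3]
      exact (congrArg₂ (· - ·) h2 h3).symm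
    have key : ∫ x, ((∑ i, w2 i * fe i x) - ∑ i, w2' i * fe i x) ^ 2 ∂μ = ‖F - G‖ ^ 2 := by
      rw [L2_norm_sq_eq]
      exact integral_congr_ae (hFG.mono fun x hx => congrArg (· ^ 2) hx)
    refine ⟨I, w2', hcardR, hsupp, ?_⟩
    show Real.sqrt (∫ x, ((∑ i, w2 i * fe i x) - ∑ i, w2' i * fe i x) ^ 2 ∂μ)
        ≤ 15 * A / Real.sqrt n
    calc Real.sqrt (∫ x, ((∑ i, w2 i * fe i x) - ∑ i, w2' i * fe i x) ^ 2 ∂μ)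
        = ‖F - G‖ := by rw [key, Real.sqrt_sq (norm_nonneg _)]
      _ ≤ Real.sqrt (A ^ 2 / k) := Real.le_sqrt_of_sq_le hnormFG
      _ = A / Real.sqrt k := by rw [Real.sqrt_div (sq_nonneg A), Real.sqrt_sq hA0]
      _ ≤ 15 * A / Real.sqrt n := by
          have hn225 : (n:ℝ) ≤ 225 * k := by
            have h1 : n ≤ 225 * (n / 100) := by omega
            calc (n:ℝ) ≤ ((225 * (n / 100) : ℕ) : ℝ) := by exact_mod_cast h1
              _ = 225 * k := by push_cast [hk]; ring
          have hsq : Real.sqrt n ≤ 15 * Real.sqrt k := by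
            calc Real.sqrt n ≤ Real.sqrt (225 * k) := Real.sqrt_le_sqrt hn225
              _ = 15 * Real.sqrt k := by
                  rw [show (225:ℝ) * k = 15 ^ 2 * (k:ℝ) by norm_num,
                    Real.sqrt_mul (by positivity), Real.sqrt_sq (by norm_num)]
          have hsk : 0 < Real.sqrt k := Real.sqrt_pos.2 hkR
          have hsn : 0 < Real.sqrt n := Real.sqrt_pos.2 (by positivity)
          rw [div_le_div_iff₀ hsk hsn]
          calc A * Real.sqrt n ≤ A * (15 * Real.sqrt k) := by gcongr
            _ = 15 * A * Real.sqrt k := by ring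
end

section
/- Let d, m ∈ ℕ and consider linear regression with noise: X a centered ℝ^d-valued random variable, Y = ⟨θ*, X⟩ + ν with ν centered, independent of X, with E[ν²] = 1. Given i.i.d. samples (X⁽ⁱ⁾)ᵢ₌₁^m, let Σ = Σᵢ X⁽ⁱ⁾(X⁽ⁱ⁾)ᵀ, Σ⁺ its Moore–Penrose pseudoinverse, and P = I_d − Σ⁺Σ the orthogonal projector onto ker Σ. Then the conditional excess risk of the minimum-norm interpolator f̂ = ⟨θ̂, ·⟩ (with θ̂ the minimum Euclidean norm empirical risk minimizer) satisfies E[R(f̂) | (X⁽ⁱ⁾)ᵢ] − R* = (θ*)ᵀ P E[XXᵀ] P θ* + Tr(Σ⁺ E[XXᵀ]). -/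
open MeasureTheory Matrix

private lemma mul_integrable {α : Type*} [MeasurableSpace α] {μ : Measure α} {f g : α → ℝ}
    (hf : MemLp f 2 μ) (hg : MemLp g 2 μ) : Integrable (fun x => f x * g x) μ := by
  have h : MemLp (f • g) 1 μ := by
    haveI : ENNReal.HolderTriple 2 2 1 := ⟨by simp [ENNReal.inv_two_add_inv_two]⟩
    exact hg.smul hf
  rw [memLp_one_iff_integrable] at h
  exact h

private lemma memLp_mul_const {α : Type*} [MeasurableSpace α] {μ : Measure α} {f : α → ℝ}
    (hf : MemLp f 2 μ) (c : ℝ) : MemLp (fun x => f x * c) 2 μ := by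
  simpa [mul_comm] using hf.const_mul c

private lemma pinv_unique {d : ℕ} (A B C : Matrix (Fin d) (Fin d) ℝ)
    (hB1 : A * B * A = A) (hB2 : B * A * B = B) (hB3 : (A*B)ᵀ = A*B) (hB4 : (B*A)ᵀ = B*A)
    (hC1 : A * C * A = A) (hC2 : C * A * C = C) (hC3 : (A*C)ᵀ = A*C) (hC4 : (C*A)ᵀ = C*A) :
    B = C := by
  have e1 : B = B * A * C := by
    calc B = B * A * B := hB2.symm
    _ = B * (A * B)ᵀ := by rw [hB3, mul_assoc]
    _ = B * Bᵀ * Aᵀ := by rw [transpose_mul, ← mul_assoc]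
    _ = B * Bᵀ * (A * C * A)ᵀ := by rw [hC1]
    _ = B * (A * B)ᵀ * (A * C)ᵀ := by
        rw [transpose_mul (A*C) A, transpose_mul A B]
        noncomm_ring
    _ = B * (A * B) * (A * C) := by rw [hB3, hC3]
    _ = (B * A * B) * (A * C) := by noncomm_ring
    _ = B * A * C := by rw [hB2, mul_assoc]
  have e2 : C = B * A * C := by
    calc C = C * A * C := hC2.symm
    _ = (C * A)ᵀ * C := by rw [hC4]
    _ = Aᵀ * Cᵀ * C := by rw [transpose_mul]
    _ = (A * B * A)ᵀ * Cᵀ * C := by rw [hB1]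
    _ = (B * A)ᵀ * (C * A)ᵀ * C := by
        rw [transpose_mul (A*B) A, transpose_mul A B, transpose_mul C A, transpose_mul B A]
        noncomm_ring
    _ = (B * A) * (C * A) * C := by rw [hB4, hC4]
    _ = B * A * (C * A * C) := by noncomm_ring
    _ = B * A * C := by rw [hC2]
  rw [e1, ← e2]


/-- Bias–variance decomposition of the conditional excess risk of the minimum-norm
least-squares interpolator: conditionally on the design `x⁽¹⁾, …, x⁽ᵐ⁾`, with labels
`y⁽ⁱ⁾ = ⟨θ*, x⁽ⁱ⁾⟩ + νᵢ` for centered, unit-variance, uncorrelated noise `ν`, and with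
`Σ⁺` the Moore–Penrose pseudoinverse of `Σ = Σᵢ x⁽ⁱ⁾(x⁽ⁱ⁾)ᵀ` (characterized by the four
Penrose equations) and `P = I − Σ⁺Σ`, the minimum-norm estimator
`θ̂ = Σ⁺·Σᵢ y⁽ⁱ⁾x⁽ⁱ⁾` satisfies
`E[R(θ̂)] − R* = (θ*)ᵀ·P·E[XXᵀ]·P·θ* + Tr(Σ⁺·E[XXᵀ])`. -/
theorem min_norm_regression_bias_variance
    (d m : ℕ)
    {Ω : Type*} [MeasurableSpace Ω] (P : Measure Ω) [IsProbabilityMeasure P]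
    {Ω' : Type*} [MeasurableSpace Ω'] (P' : Measure Ω') [IsProbabilityMeasure P']
    (θstar : Fin d → ℝ)
    (x : Fin m → Fin d → ℝ)
    (ν : Fin m → Ω → ℝ)
    (hνL2 : ∀ i, MemLp (ν i) 2 P)
    (hνmean : ∀ i, ∫ ω, ν i ω ∂P = 0)
    (hνcov : ∀ i j, (∫ ω, ν i ω * ν j ω ∂P) = if i = j then 1 else 0)
    (X : Ω' → Fin d → ℝ)
    (hXL2 : ∀ k, MemLp (fun ω' => X ω' k) 2 P')
    (hXmean : ∀ k, ∫ ω', X ω' k ∂P' = 0)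
    (νt : Ω' → ℝ) (hνtL2 : MemLp νt 2 P')
    (hνtmean : ∫ ω', νt ω' ∂P' = 0)
    (hνt2 : ∫ ω', (νt ω') ^ 2 ∂P' = 1)
    (hcross : ∀ k, ∫ ω', X ω' k * νt ω' ∂P' = 0)
    (Sig : Matrix (Fin d) (Fin d) ℝ) (hSig : Sig = ∑ i, vecMulVec (x i) (x i))
    (Sp : Matrix (Fin d) (Fin d) ℝ)
    (hSp1 : Sig * Sp * Sig = Sig) (hSp2 : Sp * Sig * Sp = Sp)
    (hSp3 : (Sig * Sp)ᵀ = Sig * Sp) (hSp4 : (Sp * Sig)ᵀ = Sp * Sig)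
    (Pker : Matrix (Fin d) (Fin d) ℝ) (hPker : Pker = 1 - Sp * Sig)
    (M : Matrix (Fin d) (Fin d) ℝ) (hM : ∀ k l, M k l = ∫ ω', X ω' k * X ω' l ∂P')
    (θhat : Ω → Fin d → ℝ)
    (hθhat : ∀ ω, θhat ω = Sp *ᵥ (∑ i, (x i ⬝ᵥ θstar + ν i ω) • x i))
    (R : (Fin d → ℝ) → ℝ)
    (hR : ∀ θ, R θ = ∫ ω', (θ ⬝ᵥ X ω' - (θstar ⬝ᵥ X ω' + νt ω')) ^ 2 ∂P')
    (Rstar : ℝ) (hRstar : Rstar = ∫ ω', (νt ω') ^ 2 ∂P') :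
    (∫ ω, R (θhat ω) ∂P) - Rstar
      = θstar ⬝ᵥ ((Pker * M * Pker) *ᵥ θstar) + (Sp * M).trace := by
  -- matrix preliminaries
  have hSigT : Sigᵀ = Sig := by
    rw [hSig]; ext k l
    simp [Matrix.sum_apply, vecMulVec_apply, mul_comm]
  have hSpT : Spᵀ = Sp := by
    refine (pinv_unique Sig Sp Spᵀ hSp1 hSp2 hSp3 hSp4 ?_ ?_ ?_ ?_).symm
    · have := congrArg Matrix.transpose hSp1
      simpa [transpose_mul, hSigT, Matrix.mul_assoc] using this
    · have := congrArg Matrix.transpose hSp2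
      simpa [transpose_mul, hSigT, Matrix.mul_assoc] using this
    · calc (Sig * Spᵀ)ᵀ = Sp * Sig := by rw [transpose_mul, transpose_transpose, hSigT]
      _ = (Sp * Sig)ᵀ := hSp4.symm
      _ = Sigᵀ * Spᵀ := by rw [transpose_mul]
      _ = Sig * Spᵀ := by rw [hSigT]
    · calc (Spᵀ * Sig)ᵀ = Sig * Sp := by rw [transpose_mul, transpose_transpose, hSigT]
      _ = (Sig * Sp)ᵀ := hSp3.symm
      _ = Spᵀ * Sigᵀ := by rw [transpose_mul]
      _ = Spᵀ * Sig := by rw [hSigT]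
  have hPkerT : Pkerᵀ = Pker := by
    rw [hPker]; simp [transpose_sub, hSp4]
  have hMsym : ∀ k l, M k l = M l k := by
    intro k l; rw [hM, hM]; simp_rw [mul_comm]
  set w : Fin m → Fin d → ℝ := fun i => Sp *ᵥ x i with hw
  set c : Fin d → ℝ := fun k => ((Sp * Sig) *ᵥ θstar) k - θstar k with hc
  -- the estimation error
  have hv : ∀ ω k, θhat ω k - θstar k = c k + ∑ i, ν i ω * w i k := by
    intro ω k
    simp only [hc, hw]
    have hS : ∀ j, (∑ i, (x i ⬝ᵥ θstar + ν i ω) • x i) j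
        = (Sig *ᵥ θstar) j + ∑ i, ν i ω * x i j := by
      intro j
      rw [hSig]
      simp only [Finset.sum_apply, Pi.smul_apply, smul_eq_mul, Matrix.mulVec,
        Matrix.sum_apply, vecMulVec_apply, dotProduct]
      calc (∑ i, (∑ l, x i l * θstar l + ν i ω) * x i j)
          = ∑ i, ((∑ l, x i j * x i l * θstar l) + ν i ω * x i j) := by
            refine Finset.sum_congr rfl fun i _ => ?_
            rw [add_mul, Finset.sum_mul]
            congr 1
            exact Finset.sum_congr rfl fun l _ => by ring
        _ = (∑ i, ∑ l, x i j * x i l * θstar l) + ∑ i, ν i ω * x i j := by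
            rw [Finset.sum_add_distrib]
        _ = (∑ l, (∑ i, x i j * x i l) * θstar l) + ∑ i, ν i ω * x i j := by
            rw [Finset.sum_comm]
            congr 1
            exact Finset.sum_congr rfl fun l _ => by rw [Finset.sum_mul]
    rw [hθhat]
    have h1 : Sp *ᵥ (∑ i, (x i ⬝ᵥ θstar + ν i ω) • x i)
        = Sp *ᵥ ((Sig *ᵥ θstar) + fun j => ∑ i, ν i ω * x i j) :=
      congrArg (Sp *ᵥ ·) (funext fun j => by rw [hS j]; rfl)
    rw [h1, mulVec_add, ← mulVec_mulVec]
    simp only [Pi.add_apply]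
    have h2 : (Sp *ᵥ fun j => ∑ i, ν i ω * x i j) k = ∑ i, ν i ω * (Sp *ᵥ x i) k := by
      simp only [Matrix.mulVec, dotProduct, Finset.mul_sum]
      rw [Finset.sum_comm]
      exact Finset.sum_congr rfl fun i _ => Finset.sum_congr rfl fun j _ => by ring
    rw [h2]
    ring
  -- risk formula
  have key : ∀ u : Fin d → ℝ, (∫ ω', ((∑ k, u k * X ω' k) - νt ω') ^ 2 ∂P')
      = (∑ k, ∑ l, M k l * (u k * u l)) + 1 := by
    intro u
    have hS2 : MemLp (fun ω' => ∑ k, u k * X ω' k) 2 P' := by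
      have h := memLp_finset_sum' (μ := P') Finset.univ
        (fun (k : Fin d) _ => (hXL2 k).const_mul (u k))
      rw [Finset.sum_fn] at h
      exact h
    have hI1 : Integrable (fun ω' => (∑ k, u k * X ω' k) * (∑ k, u k * X ω' k)) P' :=
      mul_integrable hS2 hS2
    have hI2 : Integrable (fun ω' => (∑ k, u k * X ω' k) * νt ω') P' :=
      mul_integrable hS2 hνtL2
    have hI3 : Integrable (fun ω' => νt ω' * νt ω') P' := mul_integrable hνtL2 hνtL2
    have hptw : ∀ ω', ((∑ k, u k * X ω' k) - νt ω') ^ 2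
        = (∑ k, u k * X ω' k) * (∑ k, u k * X ω' k)
          - 2 * ((∑ k, u k * X ω' k) * νt ω') + νt ω' * νt ω' := by
      intro ω'; ring
    simp only [hptw]
    have hsub : Integrable (fun ω' => (∑ k, u k * X ω' k) * (∑ k, u k * X ω' k)
        - 2 * ((∑ k, u k * X ω' k) * νt ω')) P' := hI1.sub (hI2.const_mul 2)
    rw [integral_add hsub hI3, integral_sub hI1 (hI2.const_mul 2), integral_const_mul]
    have hSν : (∫ ω', (∑ k, u k * X ω' k) * νt ω' ∂P') = 0 := by
      have hp : ∀ ω', (∑ k, u k * X ω' k) * νt ω' = ∑ k, u k * (X ω' k * νt ω') := by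
        intro ω'; rw [Finset.sum_mul]; exact Finset.sum_congr rfl fun k _ => by ring
      simp only [hp]
      rw [integral_finset_sum _ (fun k _ => (mul_integrable (hXL2 k) hνtL2).const_mul (u k))]
      simp only [integral_const_mul, hcross, mul_zero, Finset.sum_const_zero]
    have hSS : (∫ ω', (∑ k, u k * X ω' k) * (∑ k, u k * X ω' k) ∂P')
        = ∑ k, ∑ l, M k l * (u k * u l) := by
      have hp : ∀ ω', (∑ k, u k * X ω' k) * (∑ k, u k * X ω' k)
          = ∑ k, ∑ l, (u k * u l) * (X ω' k * X ω' l) := by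
        intro ω'
        rw [Finset.sum_mul_sum]
        exact Finset.sum_congr rfl fun k _ => Finset.sum_congr rfl fun l _ => by ring
      simp only [hp]
      rw [integral_finset_sum _ (fun k _ => integrable_finset_sum _
        (fun l _ => (mul_integrable (hXL2 k) (hXL2 l)).const_mul _))]
      refine Finset.sum_congr rfl fun k _ => ?_
      rw [integral_finset_sum _ (fun l _ => (mul_integrable (hXL2 k) (hXL2 l)).const_mul _)]
      refine Finset.sum_congr rfl fun l _ => ?_
      rw [integral_const_mul, ← hM k l]
      ring
    have hνν : (∫ ω', νt ω' * νt ω' ∂P') = 1 := by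
      rw [← hνt2]; exact integral_congr_ae (Filter.Eventually.of_forall fun ω' => by ring)
    rw [hSν, hSS, hνν]
    ring
  have hRform : ∀ θ, R θ
      = (∑ k, ∑ l, M k l * ((θ k - θstar k) * (θ l - θstar l))) + 1 := by
    intro θ
    rw [hR θ, ← key (fun k => θ k - θstar k)]
    refine integral_congr_ae (Filter.Eventually.of_forall fun ω' => ?_)
    have h0 : ∑ k, (θ k - θstar k) * X ω' k
        = ∑ i, θ i * X ω' i - ∑ i, θstar i * X ω' i := by
      rw [← Finset.sum_sub_distrib]
      exact Finset.sum_congr rfl fun k _ => by ring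
    dsimp only
    rw [h0]
    simp only [dotProduct]
    ring
  -- L2 facts over Ω
  have hnig : ∀ (i : Fin m) (k : Fin d), MemLp (fun ω => ν i ω * w i k) 2 P :=
    fun i k => memLp_mul_const (hνL2 i) _
  have hn2 : ∀ k, MemLp (fun ω => ∑ i, ν i ω * w i k) 2 P := by
    intro k
    have h := memLp_finset_sum' (μ := P) Finset.univ (fun (i : Fin m) _ => hnig i k)
    rw [Finset.sum_fn] at h
    exact h
  have hv2 : ∀ k, MemLp (fun ω => θhat ω k - θstar k) 2 P := by
    intro k
    have heq : (fun ω => θhat ω k - θstar k) = fun ω => c k + ∑ i, ν i ω * w i k :=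
      funext fun ω => hv ω k
    rw [heq]
    exact (memLp_const (c k)).add (hn2 k)
  have hnint : ∀ k, (∫ ω, (∑ i, ν i ω * w i k) ∂P) = 0 := by
    intro k
    rw [integral_finset_sum _ (fun i _ => ((hνL2 i).integrable one_le_two).mul_const _)]
    simp only [integral_mul_const, hνmean, zero_mul, Finset.sum_const_zero]
  -- expectation of v_k v_l
  have hvkl : ∀ k l, (∫ ω, (θhat ω k - θstar k) * (θhat ω l - θstar l) ∂P)
      = c k * c l + ∑ i, w i k * w i l := by
    intro k l
    simp only [hv]
    have hexp : ∀ ω, (c k + ∑ i, ν i ω * w i k) * (c l + ∑ i, ν i ω * w i l)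
        = c k * c l + c k * (∑ i, ν i ω * w i l)
          + ((∑ i, ν i ω * w i k) * c l
          + ∑ i, ∑ j, (ν i ω * ν j ω) * (w i k * w j l)) := by
      intro ω
      have h1 : (∑ i, ν i ω * w i k) * (∑ i, ν i ω * w i l)
          = ∑ i, ∑ j, (ν i ω * ν j ω) * (w i k * w j l) := by
        rw [Finset.sum_mul_sum]
        exact Finset.sum_congr rfl fun i _ => Finset.sum_congr rfl fun j _ => by ring
      rw [← h1]; ring
    simp only [hexp]
    have hA : Integrable (fun ω => c k * ∑ i, ν i ω * w i l) P :=
      ((hn2 l).integrable one_le_two).const_mul _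
    have hB : Integrable (fun ω => (∑ i, ν i ω * w i k) * c l) P :=
      ((hn2 k).integrable one_le_two).mul_const _
    have hC : Integrable (fun ω => ∑ i, ∑ j, (ν i ω * ν j ω) * (w i k * w j l)) P :=
      integrable_finset_sum _ fun i _ => integrable_finset_sum _ fun j _ =>
        (mul_integrable (hνL2 i) (hνL2 j)).mul_const _
    have hAB : Integrable (fun ω => c k * c l + c k * ∑ i, ν i ω * w i l) P :=
      (integrable_const _).add hA
    have hBC : Integrable (fun ω => (∑ i, ν i ω * w i k) * c l
        + ∑ i, ∑ j, (ν i ω * ν j ω) * (w i k * w j l)) P := hB.add hC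
    rw [integral_add hAB hBC,
      integral_add (integrable_const _) hA, integral_add hB hC,
      integral_const, integral_const_mul, integral_mul_const,
      integral_finset_sum _ (fun i _ => integrable_finset_sum _ fun j _ =>
        (mul_integrable (hνL2 i) (hνL2 j)).mul_const _),
      hnint k, hnint l]
    have hD : ∀ i : Fin m, (∫ ω, ∑ j, (ν i ω * ν j ω) * (w i k * w j l) ∂P)
        = w i k * w i l := by
      intro i
      rw [integral_finset_sum _ (fun j _ => (mul_integrable (hνL2 i) (hνL2 j)).mul_const _)]
      have h2 : ∀ j, (∫ ω, (ν i ω * ν j ω) * (w i k * w j l) ∂P)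
          = (if i = j then (1:ℝ) else 0) * (w i k * w j l) := by
        intro j; rw [integral_mul_const, hνcov]
      simp only [h2, ite_mul, one_mul, zero_mul]
      simp
    simp only [hD]
    simp
  -- main integral computation
  have hmain : (∫ ω, R (θhat ω) ∂P)
      = (∑ k, ∑ l, M k l * (c k * c l + ∑ i, w i k * w i l)) + 1 := by
    simp only [hRform]
    have hint2 : ∀ k l, Integrable (fun ω => (θhat ω k - θstar k) * (θhat ω l - θstar l)) P :=
      fun k l => mul_integrable (hv2 k) (hv2 l)
    have hIsum : Integrable
        (fun ω => ∑ k, ∑ l, M k l * ((θhat ω k - θstar k) * (θhat ω l - θstar l))) P :=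
      integrable_finset_sum _ fun k _ => integrable_finset_sum _ fun l _ =>
        (hint2 k l).const_mul _
    rw [integral_add hIsum (integrable_const _),
      integral_finset_sum _ (fun k _ => integrable_finset_sum _ fun l _ =>
        (hint2 k l).const_mul (M k l)), integral_const]
    simp only [measure_univ, ENNReal.toReal_one, smul_eq_mul, one_mul, probReal_univ]
    congr 1
    refine Finset.sum_congr rfl fun k _ => ?_
    rw [integral_finset_sum _ (fun l _ => (hint2 k l).const_mul _)]
    refine Finset.sum_congr rfl fun l _ => ?_
    rw [integral_const_mul, hvkl]
  have hRstar1 : Rstar = 1 := by rw [hRstar, hνt2]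
  -- final algebra
  have hbias : (∑ k, ∑ l, M k l * (c k * c l))
      = θstar ⬝ᵥ ((Pker * M * Pker) *ᵥ θstar) := by
    have hcP : Pker *ᵥ θstar = fun k => -c k := by
      funext k
      rw [hPker, Matrix.sub_mulVec, Matrix.one_mulVec]
      simp only [hc, Pi.sub_apply]
      ring
    have h1 : θstar ⬝ᵥ ((Pker * M * Pker) *ᵥ θstar)
        = (Pker *ᵥ θstar) ⬝ᵥ (M *ᵥ (Pker *ᵥ θstar)) := by
      rw [← mulVec_mulVec, ← mulVec_mulVec, dotProduct_mulVec, ← mulVec_transpose, hPkerT]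
    rw [h1, hcP]
    simp only [dotProduct, Matrix.mulVec]
    refine Finset.sum_congr rfl fun k _ => ?_
    rw [Finset.mul_sum]
    exact Finset.sum_congr rfl fun l _ => by ring
  have hvar : (∑ k, ∑ l, M k l * (∑ i, w i k * w i l)) = (Sp * M).trace := by
    have hw2 : ∀ k l, (∑ i, w i k * w i l) = Sp k l := by
      intro k l
      have h1 : ∀ i : Fin m, (Sp * vecMulVec (x i) (x i) * Spᵀ) k l = w i k * w i l := by
        intro i
        simp only [Matrix.mul_apply, vecMulVec_apply, transpose_apply, hw,
          Matrix.mulVec, dotProduct]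
        rw [Finset.sum_mul_sum, Finset.sum_comm]
        refine Finset.sum_congr rfl fun a _ => ?_
        rw [Finset.sum_mul]
        exact Finset.sum_congr rfl fun b _ => by ring
      have h2 : Sp * Sig * Spᵀ = ∑ i, Sp * vecMulVec (x i) (x i) * Spᵀ := by
        simp only [hSig, Finset.mul_sum, Finset.sum_mul]
      have h3 : Sp * Sig * Spᵀ = Sp := by rw [hSpT, hSp2]
      calc (∑ i, w i k * w i l) = ∑ i, (Sp * vecMulVec (x i) (x i) * Spᵀ) k l :=
            Finset.sum_congr rfl fun i _ => (h1 i).symm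
        _ = (∑ i, Sp * vecMulVec (x i) (x i) * Spᵀ) k l := by rw [Matrix.sum_apply]
        _ = (Sp * Sig * Spᵀ) k l := by rw [← h2]
        _ = Sp k l := by rw [h3]
    simp only [hw2]
    have htr : (Sp * M).trace = ∑ a, ∑ b, Sp a b * M b a := by
      simp [Matrix.trace, Matrix.diag, Matrix.mul_apply]
    rw [htr]
    refine Finset.sum_congr rfl fun k _ => ?_
    refine Finset.sum_congr rfl fun l _ => ?_
    rw [hMsym k l]
    ring
  rw [hmain, hRstar1]
  simp only [mul_add, Finset.sum_add_distrib]
  rw [hbias, hvar]; ring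
end

section
/- Let r : ℝ^d → ℝ be differentiable, and suppose training data ((x⁽ⁱ⁾, y⁽ⁱ⁾))ᵢ₌₁^m with x⁽ⁱ⁾ ∈ ℝ^d, y⁽ⁱ⁾ ∈ {−1, 1} is linearly separable, i.e., there exists θ̂ ≠ 0 with y⁽ⁱ⁾⟨θ̂, x⁽ⁱ⁾⟩ > 0 for all i. Define the empirical exponential-loss risk r(θ) = (1/m)·Σᵢ exp(−y⁽ⁱ⁾⟨θ, x⁽ⁱ⁾⟩). Then r has no critical points: for every θ ∈ ℝ^d, ⟨θ̂, ∇r(θ)⟩ < 0, and in particular ∇r(θ) ≠ 0 and the infimum of r is not attained. -/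
open scoped RealInnerProductSpace

/-- For linearly separable data, the empirical exponential-loss risk of a linear
classifier has no critical points: `⟨θ̂, ∇r(θ)⟩ < 0` for every `θ` (where `θ̂` is a
separator), hence `∇r(θ) ≠ 0`, and the infimum of `r` is not attained. -/
theorem exp_loss_no_critical_points
    (d m : ℕ) (hm : 0 < m)
    (x : Fin m → EuclideanSpace ℝ (Fin d)) (y : Fin m → ℝ)
    (hy : ∀ i, y i = 1 ∨ y i = -1)
    (θhat : EuclideanSpace ℝ (Fin d)) (hθhat : θhat ≠ 0)
    (hsep : ∀ i, 0 < y i * ⟪θhat, x i⟫)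
    (r : EuclideanSpace ℝ (Fin d) → ℝ)
    (hr : ∀ θ, r θ = (1 / m) * ∑ i, Real.exp (-(y i * ⟪θ, x i⟫))) :
    ∀ θ : EuclideanSpace ℝ (Fin d),
      ⟪θhat, gradient r θ⟫ < 0 ∧ gradient r θ ≠ 0 ∧ ∃ θ', r θ' < r θ := by
  intro θ
  have hm' : (0:ℝ) < 1 / m := by positivity
  set g : EuclideanSpace ℝ (Fin d) :=
    (1 / m : ℝ) • ∑ i, (-(y i) * Real.exp (-(y i * ⟪θ, x i⟫))) • x i with hg
  -- compute fderiv of each summand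
  have hfd : ∀ i : Fin m, HasFDerivAt
      (fun θ' : EuclideanSpace ℝ (Fin d) => Real.exp (-(y i * ⟪θ', x i⟫)))
      ((-(y i) * Real.exp (-(y i * ⟪θ, x i⟫))) • innerSL ℝ (x i)) θ := by
    intro i
    have h0 : HasFDerivAt (fun θ' : EuclideanSpace ℝ (Fin d) => -(y i * ⟪θ', x i⟫))
        ((-(y i)) • innerSL ℝ (x i)) θ := by
      have h1 : HasFDerivAt (fun θ' : EuclideanSpace ℝ (Fin d) => (innerSL ℝ (x i)) θ')
          (innerSL ℝ (x i)) θ := (innerSL ℝ (x i)).hasFDerivAt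
      have h2 := (h1.const_mul (y i)).neg
      convert h2 using 1
      · rfl
      · rfl
      · rfl
      · funext θ'
        simp only [innerSL_apply_apply, real_inner_comm, Pi.neg_apply]
      · rw [neg_smul]
    have h3 := h0.exp
    convert h3 using 1
    · rfl
    ext w
    simp [real_inner_comm]
    ring
  have hfdr : HasFDerivAt r
      ((1 / m : ℝ) • ∑ i, ((-(y i) * Real.exp (-(y i * ⟪θ, x i⟫))) • innerSL ℝ (x i))) θ := by
    have hsum : HasFDerivAt
        (fun θ' : EuclideanSpace ℝ (Fin d) => ∑ i, Real.exp (-(y i * ⟪θ', x i⟫)))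
        (∑ i, ((-(y i) * Real.exp (-(y i * ⟪θ, x i⟫))) • innerSL ℝ (x i))) θ :=
      HasFDerivAt.fun_sum fun i _ => hfd i
    have := hsum.const_smul (1 / m : ℝ)
    convert this using 1
    · rfl
    · rfl
    · rfl
    funext θ'
    rw [hr θ']
    simp [smul_eq_mul]
  have hgrad : HasGradientAt r g θ := by
    rw [hasGradientAt_iff_hasFDerivAt]
    convert hfdr using 1
    · rfl
    · rfl
    rw [hg]
    ext w
    simp [InnerProductSpace.toDual_apply_apply, inner_smul_left, inner_sum, real_inner_smul_left]
  have hgr : gradient r θ = g := hgrad.gradient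
  -- inner product formula
  have hinner : ⟪θhat, g⟫ = (1 / m : ℝ) *
      ∑ i, -(Real.exp (-(y i * ⟪θ, x i⟫)) * (y i * ⟪θhat, x i⟫)) := by
    rw [hg, real_inner_smul_right, inner_sum]
    congr 1
    apply Finset.sum_congr rfl
    intro i _
    rw [real_inner_smul_right]
    ring
  have hneg : ⟪θhat, g⟫ < 0 := by
    rw [hinner]
    apply mul_neg_of_pos_of_neg hm'
    apply Finset.sum_neg
    · intro i _
      have := hsep i
      have he := Real.exp_pos (-(y i * ⟪θ, x i⟫))
      nlinarith
    · exact Finset.univ_nonempty_iff.mpr ⟨⟨0, hm⟩⟩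
  refine ⟨by rwa [hgr], ?_, ?_⟩
  · intro h
    rw [hgr] at h
    rw [h] at hneg
    simp at hneg
  · refine ⟨θ + θhat, ?_⟩
    rw [hr, hr]
    apply mul_lt_mul_of_pos_left _ hm'
    apply Finset.sum_lt_sum_of_nonempty (Finset.univ_nonempty_iff.mpr ⟨⟨0, hm⟩⟩)
    intro i _
    apply Real.exp_lt_exp.mpr
    have h1 : ⟪θ + θhat, x i⟫ = ⟪θ, x i⟫ + ⟪θhat, x i⟫ := inner_add_left _ _ _
    rw [h1, mul_add]
    linarith [hsep i]
end
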